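/- arXiv:2009.12782 — 14 statements merged into one kernel-verified Lean document; each statement's English description precedes it below -/
import Mathlib

section
/- For every signed Gauss code with n crossings, |C⁺| + |C⁻| ≤ ⌊n²/4⌋. -/
/-- A signed Gauss code on a finite set `C` of crossing labels: each crossing `c`
has an over-occurrence `c⁺` at word position `pos c true` and an under-occurrence
`c⁻` at position `pos c false` (positions are integers, only their order matters),
all `2n` positions are distinct, and each crossing carries a sign `±1`. -/
structure GaussCode (C : Type) [Fintype C] [DecidableEq C] where
  pos : C → Bool → ℤ
  inj : Function.Injective fun p : C × Bool => pos p.1 p.2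
  sign : C → ℤ
  sign_unit : ∀ c, sign c = 1 ∨ sign c = -1

namespace GaussCode

variable {C : Type} [Fintype C] [DecidableEq C]

/-- `(x, y)` is an upper skew pair: `x⁺ < y⁻ < x⁻ < y⁺`. -/
def UpperSkew (G : GaussCode C) (x y : C) : Prop :=
  G.pos x true < G.pos y false ∧ G.pos y false < G.pos x false ∧
    G.pos x false < G.pos y true

/-- `(x, y)` is a lower skew pair: `x⁻ < y⁺ < x⁺ < y⁻`. -/
def LowerSkew (G : GaussCode C) (x y : C) : Prop :=
  G.pos x false < G.pos y true ∧ G.pos y true < G.pos x true ∧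
    G.pos x true < G.pos y false

instance (G : GaussCode C) (x y : C) : Decidable (G.UpperSkew x y) := by
  unfold UpperSkew; infer_instance

instance (G : GaussCode C) (x y : C) : Decidable (G.LowerSkew x y) := by
  unfold LowerSkew; infer_instance

/-- `P⁺`: the set of upper skew pairs. -/
def Pplus (G : GaussCode C) : Finset (C × C) :=
  Finset.univ.filter fun p => G.UpperSkew p.1 p.2

/-- `P⁻`: the set of lower skew pairs. -/
def Pminus (G : GaussCode C) : Finset (C × C) :=
  Finset.univ.filter fun p => G.LowerSkew p.1 p.2

/-- `C⁺`: the sum of the signs `ε(x)·ε(y)` over all upper skew pairs. -/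
def Cplus (G : GaussCode C) : ℤ := ∑ p ∈ G.Pplus, G.sign p.1 * G.sign p.2

/-- `C⁻`: the sum of the signs `ε(x)·ε(y)` over all lower skew pairs. -/
def Cminus (G : GaussCode C) : ℤ := ∑ p ∈ G.Pminus, G.sign p.1 * G.sign p.2

/-- The occurrence at position `q` immediately follows the one at position `p`:
no occurrence of the word lies strictly between them. -/
def Imm (G : GaussCode C) (p q : ℤ) : Prop :=
  p < q ∧ ∀ (d : C) (b : Bool), ¬ (p < G.pos d b ∧ G.pos d b < q)

end GaussCode

/-- for every signed Gauss code with `n` crossings,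
`|C⁺| + |C⁻| ≤ ⌊n²/4⌋`. -/
theorem casson_abs_sum_le_crossing_sq_div_four {C : Type} [Fintype C] [DecidableEq C]
    (G : GaussCode C) :
    G.Cplus.natAbs + G.Cminus.natAbs ≤ Fintype.card C ^ 2 / 4 := by
  classical
  set A : Finset C := Finset.univ.filter (fun c => G.pos c true < G.pos c false) with hA
  set B : Finset C := Finset.univ.filter (fun c => ¬ G.pos c true < G.pos c false) with hB
  -- |C⁺| ≤ |P⁺| and |C⁻| ≤ |P⁻|
  have habs : ∀ (S : Finset (C × C)),
      (∑ p ∈ S, G.sign p.1 * G.sign p.2).natAbs ≤ S.card := by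
    intro S
    have h : |∑ p ∈ S, G.sign p.1 * G.sign p.2| ≤ (S.card : ℤ) := by
      calc |∑ p ∈ S, G.sign p.1 * G.sign p.2|
          ≤ ∑ p ∈ S, |G.sign p.1 * G.sign p.2| := Finset.abs_sum_le_sum_abs _ _
        _ = ∑ p ∈ S, 1 := Finset.sum_congr rfl (by
              intro p _
              rcases G.sign_unit p.1 with h1 | h1 <;> rcases G.sign_unit p.2 with h2 | h2 <;>
                simp [h1, h2])
        _ = S.card := by simp
    rw [Int.abs_eq_natAbs] at h
    exact_mod_cast h
  have hCp : G.Cplus.natAbs ≤ G.Pplus.card := habs _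
  have hCm : G.Cminus.natAbs ≤ G.Pminus.card := habs _
  -- P⁺ ∪ swap(P⁻) ⊆ A ×ˢ B, disjointly
  have hsub1 : G.Pplus ⊆ A ×ˢ B := by
    intro p hp
    rw [GaussCode.Pplus, Finset.mem_filter] at hp
    obtain ⟨-, h1, h2, h3⟩ := hp
    rw [Finset.mem_product, hA, hB]
    constructor <;> simp only [Finset.mem_filter, Finset.mem_univ, true_and]
    · exact h1.trans h2
    · exact not_lt_of_gt (h2.trans h3)
  have hsub2 : G.Pminus.image Prod.swap ⊆ A ×ˢ B := by
    intro q hq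
    rw [Finset.mem_image] at hq
    obtain ⟨p, hp, rfl⟩ := hq
    rw [GaussCode.Pminus, Finset.mem_filter] at hp
    obtain ⟨-, h1, h2, h3⟩ := hp
    rw [Finset.mem_product, hA, hB]
    constructor <;> simp only [Prod.fst_swap, Prod.snd_swap,
      Finset.mem_filter, Finset.mem_univ, true_and]
    · exact h2.trans h3
    · exact not_lt_of_gt (h1.trans h2)
  have hdisj : Disjoint G.Pplus (G.Pminus.image Prod.swap) := by
    rw [Finset.disjoint_left]
    intro p hp hq
    rw [GaussCode.Pplus, Finset.mem_filter] at hp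
    obtain ⟨-, h1, h2, h3⟩ := hp
    rw [Finset.mem_image] at hq
    obtain ⟨r, hr, hrp⟩ := hq
    rw [GaussCode.Pminus, Finset.mem_filter] at hr
    obtain ⟨-, g1, g2, g3⟩ := hr
    have : r = p.swap := by rw [← hrp, Prod.swap_swap]
    subst this
    simp only [Prod.fst_swap, Prod.snd_swap] at g1 g2 g3
    exact absurd (h1.trans g1) (lt_irrefl _)
  have hcard : G.Pplus.card + G.Pminus.card ≤ A.card * B.card := by
    have h1 : (G.Pplus ∪ G.Pminus.image Prod.swap).card ≤ (A ×ˢ B).card :=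
      Finset.card_le_card (Finset.union_subset hsub1 hsub2)
    rw [Finset.card_union_of_disjoint hdisj, Finset.card_product,
      Finset.card_image_of_injective _ Prod.swap_injective] at h1
    exact h1
  have hAB : A.card + B.card = Fintype.card C := by
    rw [hA, hB]
    rw [Finset.card_filter_add_card_filter_not]
    exact Finset.card_univ
  -- conclude
  have hfin : A.card * B.card ≤ Fintype.card C ^ 2 / 4 := by
    rw [Nat.le_div_iff_mul_le (by norm_num)]
    have := two_mul_le_add_sq A.card B.card
    nlinarith [sq_nonneg (A.card + B.card), hAB]
  omega
end

section
/- For every integer j ≥ 1, the upper skew pairs of the signed Gauss code W_j are exactly the pairs (x_{2k−1}, x_{2l}) with 1 ≤ k ≤ l ≤ j; in particular, the number of upper skew pairs of W_j equals j(j+1)/2. -/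
/-- The signed Gauss code `W j` on the `2j` crossings `x₁, …, x_{2j}` (crossing `x_m`
is the index `m - 1 : Fin (2*j)`), all of sign `+1`, with word
`x₁⁺ x₂⁻ x₃⁺ x₄⁻ … x_{2j−1}⁺ x_{2j}⁻ x₁⁻ x₂⁺ x₃⁻ x₄⁺ … x_{2j−1}⁻ x_{2j}⁺`:
the occurrence of `x_{i+1}` in the first half sits at position `i`,
the other occurrence at position `i + 2j`; for even `i` (odd label) the
over-occurrence comes first, for odd `i` the under-occurrence comes first. -/
def W (j : ℕ) : GaussCode (Fin (2 * j)) where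
  pos i b :=
    if ((i : ℕ) % 2 = 0 ↔ b = true) then ((i : ℕ) : ℤ)
    else ((i : ℕ) : ℤ) + 2 * (j : ℤ)
  inj := by
    rintro ⟨i, b⟩ ⟨k, c⟩ h
    dsimp only at h
    have hi : (i : ℕ) < 2 * j := i.isLt
    have hk : (k : ℕ) < 2 * j := k.isLt
    split_ifs at h with h1 h2 h2
    · have hik : i = k := Fin.ext (by omega)
      subst hik
      have hbc : b = c := by cases b <;> cases c <;> simp_all
      rw [hbc]
    · exact absurd h (by omega)
    · exact absurd h (by omega)
    · have hik : i = k := Fin.ext (by omega)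
      subst hik
      have hbc : b = c := by cases b <;> cases c <;> simp_all
      rw [hbc]
  sign _ := 1
  sign_unit _ := Or.inl rfl

lemma upperSkew_W_key (j : ℕ) (a b : Fin (2 * j)) :
    (W j).UpperSkew a b ↔ ((a : ℕ) % 2 = 0 ∧ (b : ℕ) % 2 = 1 ∧ (a : ℕ) < (b : ℕ)) := by
  have ha := a.isLt
  have hb := b.isLt
  rcases Nat.mod_two_eq_zero_or_one (a : ℕ) with pa | pa <;>
    rcases Nat.mod_two_eq_zero_or_one (b : ℕ) with pb | pb <;>
      simp [W, GaussCode.UpperSkew, pa, pb] <;> omega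

lemma gauss_aux : ∀ n : ℕ, 2 * (∑ s ∈ Finset.range n, (n - s)) = n * (n + 1) := by
  intro n
  induction n with
  | zero => simp
  | succ n ih =>
    have h1 : ∀ s ∈ Finset.range n, n + 1 - s = (n - s) + 1 := by
      intro s hs; simp only [Finset.mem_range] at hs; omega
    rw [Finset.sum_range_succ, Finset.sum_congr rfl h1, Finset.sum_add_distrib,
      Finset.sum_const, Finset.card_range, smul_eq_mul, mul_one, Nat.add_sub_cancel_left]
    have h2 : (n + 1) * (n + 1 + 1) = n * (n + 1) + 2 * (n + 1) := by ring
    linarith [ih]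

/-- for `j ≥ 1`, the upper skew pairs of `W j` are exactly the pairs
`(x_{2k−1}, x_{2l})` with `1 ≤ k ≤ l ≤ j` (crossing `x_m` has index `m - 1`);
in particular `|P⁺(W j)| = j(j+1)/2`. -/
theorem upperSkew_W_iff (j : ℕ) (hj : 1 ≤ j) :
    (∀ a b : Fin (2 * j), (W j).UpperSkew a b ↔
      ∃ k l : ℕ, 1 ≤ k ∧ k ≤ l ∧ l ≤ j ∧
        (a : ℕ) = 2 * k - 2 ∧ (b : ℕ) = 2 * l - 1) ∧
    (W j).Pplus.card = j * (j + 1) / 2 := by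
  constructor
  · intro a b
    rw [upperSkew_W_key]
    have ha := a.isLt
    have hb := b.isLt
    constructor
    · rintro ⟨h1, h2, h3⟩
      exact ⟨(a : ℕ) / 2 + 1, (b : ℕ) / 2 + 1, by omega, by omega, by omega, by omega, by omega⟩
    · rintro ⟨k, l, hk, hkl, hlj, hA, hB⟩
      omega
  · have hmem : ∀ p : Fin (2 * j) × Fin (2 * j), p ∈ (W j).Pplus ↔
        ((p.1 : ℕ) % 2 = 0 ∧ (p.2 : ℕ) % 2 = 1 ∧ (p.1 : ℕ) < (p.2 : ℕ)) := by
      intro p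
      simp [GaussCode.Pplus, upperSkew_W_key]
    have hcard : (W j).Pplus.card =
        (((Finset.range j) ×ˢ (Finset.range j)).filter fun p => p.1 ≤ p.2).card := by
      refine Finset.card_bij' (fun a _ => (((a.1 : ℕ)) / 2, ((a.2 : ℕ)) / 2))
        (fun p hp => (⟨2 * p.1, ?_⟩, ⟨2 * p.2 + 1, ?_⟩)) ?_ ?_ ?_ ?_
      · simp only [Finset.mem_filter, Finset.mem_product, Finset.mem_range] at hp; omega
      · simp only [Finset.mem_filter, Finset.mem_product, Finset.mem_range] at hp; omega
      · intro a ha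
        rw [hmem] at ha
        have h1 := a.1.isLt
        have h2 := a.2.isLt
        simp only [Finset.mem_filter, Finset.mem_product, Finset.mem_range]
        omega
      · intro p hp
        simp only [Finset.mem_filter, Finset.mem_product, Finset.mem_range] at hp
        rw [hmem]
        simp only []
        omega
      · intro a ha
        rw [hmem] at ha
        ext <;> simp <;> omega
      · intro p hp
        simp only [Finset.mem_filter, Finset.mem_product, Finset.mem_range] at hp
        ext <;> simp <;> omega
    have hsum : (((Finset.range j) ×ˢ (Finset.range j)).filter fun p => p.1 ≤ p.2).card =
        ∑ s ∈ Finset.range j, (j - s) := by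
      rw [Finset.card_filter, Finset.sum_product]
      refine Finset.sum_congr rfl fun s hs => ?_
      rw [← Finset.card_filter]
      have : (Finset.range j).filter (fun t => s ≤ t) = Finset.Ico s j := by
        ext t
        simp only [Finset.mem_filter, Finset.mem_range, Finset.mem_Ico]
        omega
      rw [this, Nat.card_Ico]
    rw [hcard, hsum, ← gauss_aux j, Nat.mul_div_cancel_left _ (by norm_num)]
end

section
/- For every integer j ≥ 1, the lower skew pairs of the signed Gauss code W_j are exactly the pairs (x_{2k}, x_{2l−1}) with 1 ≤ k < l ≤ j; in particular, the number of lower skew pairs of W_j equals j(j−1)/2. -/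
/-- for `j ≥ 1`, the lower skew pairs of `W j` are exactly the pairs
`(x_{2k}, x_{2l−1})` with `1 ≤ k < l ≤ j` (crossing `x_m` has index `m - 1`);
in particular `|P⁻(W j)| = j(j−1)/2`. -/
theorem lowerSkew_W_iff (j : ℕ) (hj : 1 ≤ j) :
    (∀ a b : Fin (2 * j), (W j).LowerSkew a b ↔
      ∃ k l : ℕ, 1 ≤ k ∧ k < l ∧ l ≤ j ∧
        (a : ℕ) = 2 * k - 1 ∧ (b : ℕ) = 2 * l - 2) ∧
    (W j).Pminus.card = j * (j - 1) / 2 := by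
  classical
  have ha2 : ∀ a : Fin (2 * j), (a : ℕ) < 2 * j := fun a => a.isLt
  have hiff : ∀ a b : Fin (2 * j), (W j).LowerSkew a b ↔
      ∃ k l : ℕ, 1 ≤ k ∧ k < l ∧ l ≤ j ∧
        (a : ℕ) = 2 * k - 1 ∧ (b : ℕ) = 2 * l - 2 := by
    intro a b
    have ha := a.isLt; have hb := b.isLt
    simp only [GaussCode.LowerSkew, W, Bool.false_eq_true, iff_true, iff_false]
    constructor
    · rintro ⟨h1, h2, h3⟩
      split_ifs at h1 h2 h3 <;>
        exact ⟨((a : ℕ) + 1) / 2, (b : ℕ) / 2 + 1, by omega, by omega, by omega,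
          by omega, by omega⟩
    · rintro ⟨k, l, hk, hkl, hl, hae, hbe⟩
      refine ⟨?_, ?_, ?_⟩ <;> (split_ifs <;> omega)
  refine ⟨hiff, ?_⟩
  have hScard : ((Finset.range j).biUnion
      (fun l => (Finset.range l).image (fun k => (k, l)))).card = j * (j - 1) / 2 := by
    rw [Finset.card_biUnion]
    · have hinj : ∀ l : ℕ, ((Finset.range l).image (fun k => (k, l))).card = l := by
        intro l
        rw [Finset.card_image_of_injective _ (fun x y h => by injection h), Finset.card_range]
      simp only [hinj]
      exact Finset.sum_range_id j
    · intro x _ y _ hxy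
      simp only [Finset.disjoint_left, Finset.mem_image, Finset.mem_range]
      rintro ⟨p1, p2⟩ hp1 hp2
      obtain ⟨k, hk, e1⟩ := hp1
      obtain ⟨k', hk', e2⟩ := hp2
      injection e1 with _ e1b
      injection e2 with _ e2b
      exact hxy (e1b.trans e2b.symm)
  rw [← hScard]
  have hmemS : ∀ q : ℕ × ℕ, q ∈ ((Finset.range j).biUnion
      (fun l => (Finset.range l).image (fun k => (k, l)))) ↔ q.2 < j ∧ q.1 < q.2 := by
    rintro ⟨q1, q2⟩
    simp only [Finset.mem_biUnion, Finset.mem_image, Finset.mem_range]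
    constructor
    · rintro ⟨l, hl, k, hk, e⟩
      injection e with e1 e2
      subst e1; subst e2
      exact ⟨hl, hk⟩
    · rintro ⟨h1, h2⟩
      exact ⟨q2, h1, q1, h2, rfl⟩
  have hmemP : ∀ p : Fin (2 * j) × Fin (2 * j),
      p ∈ (W j).Pminus ↔ (W j).LowerSkew p.1 p.2 := by
    intro p
    simp [GaussCode.Pminus]
  refine Finset.card_bij (fun p _ => (((p.1 : ℕ) - 1) / 2, (p.2 : ℕ) / 2)) ?_ ?_ ?_
  · rintro ⟨a, b⟩ hp
    rw [hmemP] at hp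
    obtain ⟨k, l, hk, hkl, hl, hae, hbe⟩ := (hiff a b).1 hp
    rw [hmemS]
    constructor <;> (dsimp only; omega)
  · rintro ⟨a1, b1⟩ hp1 ⟨a2, b2⟩ hp2 he
    rw [hmemP] at hp1 hp2
    obtain ⟨k1, l1, hk1, hkl1, hl1, hae1, hbe1⟩ := (hiff a1 b1).1 hp1
    obtain ⟨k2, l2, hk2, hkl2, hl2, hae2, hbe2⟩ := (hiff a2 b2).1 hp2
    injection he with he1 he2
    dsimp only at he1 he2
    have : (a1 : ℕ) = (a2 : ℕ) ∧ (b1 : ℕ) = (b2 : ℕ) := by omega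
    exact Prod.ext (Fin.ext this.1) (Fin.ext this.2)
  · rintro ⟨q1, q2⟩ hq
    rw [hmemS] at hq
    obtain ⟨h1, h2⟩ := hq
    refine ⟨(⟨2 * q1 + 1, by omega⟩, ⟨2 * q2, by omega⟩), ?_, ?_⟩
    · rw [hmemP]
      exact (hiff _ _).2 ⟨q1 + 1, q2 + 1, by omega, by omega, by omega, by simp; omega, by simp; omega⟩
    · simp only [Prod.mk.injEq]
      omega
end

section
/- For every integer j ≥ 1, C⁺(W_j) + C⁻(W_j) = j² = ⌊(2j)²/4⌋; hence the code W_j, which has 2j crossings, attains equality in the bound |C⁺| + |C⁻| ≤ ⌊n²/4⌋. -/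
/-- for `j ≥ 1`, `C⁺(W j) + C⁻(W j) = j² = ⌊(2j)²/4⌋`; hence the code
`W j`, which has `2j` crossings, attains equality in `|C⁺| + |C⁻| ≤ ⌊n²/4⌋`. -/
theorem W_attains_crossing_bound (j : ℕ) (hj : 1 ≤ j) :
    (W j).Cplus + (W j).Cminus = (j : ℤ) ^ 2 ∧
    (j : ℤ) ^ 2 = (((2 * j) ^ 2 / 4 : ℕ) : ℤ) ∧
    (W j).Cplus.natAbs + (W j).Cminus.natAbs =
      Fintype.card (Fin (2 * j)) ^ 2 / 4 := by
  have hU : ∀ x y : Fin (2*j), (W j).UpperSkew x y ↔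
      ((x:ℕ)%2 = 0 ∧ (y:ℕ)%2 = 1 ∧ (x:ℕ) < y) := by
    intro x y
    have hx := x.isLt; have hy := y.isLt
    simp only [GaussCode.UpperSkew, W]
    split_ifs <;> simp_all <;> omega
  have hL : ∀ x y : Fin (2*j), (W j).LowerSkew x y ↔
      ((x:ℕ)%2 = 1 ∧ (y:ℕ)%2 = 0 ∧ (x:ℕ) < y) := by
    intro x y
    have hx := x.isLt; have hy := y.isLt
    simp only [GaussCode.LowerSkew, W]
    split_ifs <;> simp_all <;> omega
  have hdisj : Disjoint (W j).Pplus (W j).Pminus := by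
    rw [Finset.disjoint_left]
    intro p hp hq
    simp only [GaussCode.Pplus, GaussCode.Pminus, Finset.mem_filter] at hp hq
    rw [hU] at hp; rw [hL] at hq
    omega
  have hS : (W j).Pplus ∪ (W j).Pminus =
      Finset.univ.filter (fun p : Fin (2*j) × Fin (2*j) =>
        (p.1:ℕ) < p.2 ∧ (p.1:ℕ)%2 ≠ (p.2:ℕ)%2) := by
    ext p
    simp only [GaussCode.Pplus, GaussCode.Pminus, Finset.mem_union,
      Finset.mem_filter, Finset.mem_univ, true_and]
    rw [hU, hL]
    have := (p.1:ℕ).mod_two_eq_zero_or_one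
    have := (p.2:ℕ).mod_two_eq_zero_or_one
    omega
  have hcard : ((W j).Pplus ∪ (W j).Pminus).card = j * j := by
    rw [hS]
    have := Finset.card_nbij'
      (i := fun p : Fin (2*j) × Fin (2*j) =>
        if (p.1:ℕ) % 2 = 0 then
          ((⟨(p.1:ℕ)/2, by have := p.1.isLt; omega⟩ : Fin j),
           (⟨(p.2:ℕ)/2, by have := p.2.isLt; omega⟩ : Fin j))
        else
          ((⟨(p.2:ℕ)/2, by have := p.2.isLt; omega⟩ : Fin j),
           (⟨(p.1:ℕ)/2, by have := p.1.isLt; omega⟩ : Fin j)))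
      (j := fun q : Fin j × Fin j =>
        if (q.1:ℕ) ≤ q.2 then
          ((⟨2*(q.1:ℕ), by have := q.1.isLt; omega⟩ : Fin (2*j)),
           (⟨2*(q.2:ℕ)+1, by have := q.2.isLt; omega⟩ : Fin (2*j)))
        else
          ((⟨2*(q.2:ℕ)+1, by have := q.2.isLt; omega⟩ : Fin (2*j)),
           (⟨2*(q.1:ℕ), by have := q.1.isLt; omega⟩ : Fin (2*j))))
      (s := Finset.univ.filter (fun p : Fin (2*j) × Fin (2*j) =>
        (p.1:ℕ) < p.2 ∧ (p.1:ℕ)%2 ≠ (p.2:ℕ)%2))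
      (t := Finset.univ)
      (by intro a ha; simp)
      (by
        intro q hq
        simp only [Finset.mem_filter, Finset.mem_univ, true_and]
        split_ifs <;> simp <;> omega)
      (by
        intro p hp
        simp only [Finset.mem_coe, Finset.mem_filter, Finset.mem_univ, true_and] at hp
        obtain ⟨h1, h2⟩ := hp
        have m1 := (p.1:ℕ).mod_two_eq_zero_or_one
        have m2 := (p.2:ℕ).mod_two_eq_zero_or_one
        dsimp only
        split_ifs <;> simp_all [Prod.ext_iff, Fin.ext_iff] <;> omega)
      (by
        intro q hq
        have q1 := q.1.isLt; have q2 := q.2.isLt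
        dsimp only
        split_ifs <;> simp_all [Prod.ext_iff, Fin.ext_iff] <;> omega)
    rw [this]
    simp [Nat.mul_comm]
  have hs : ∀ c, (W j).sign c = 1 := fun _ => rfl
  have h1 : (W j).Cplus = ((W j).Pplus.card : ℤ) := by
    simp [GaussCode.Cplus, hs]
  have h2 : (W j).Cminus = ((W j).Pminus.card : ℤ) := by
    simp [GaussCode.Cminus, hs]
  have hsum : (W j).Pplus.card + (W j).Pminus.card = j * j := by
    rw [← Finset.card_union_of_disjoint hdisj, hcard]
  refine ⟨?_, ?_, ?_⟩
  · rw [h1, h2, ← Nat.cast_add, hsum]; push_cast; ring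
  · have : (2 * j) ^ 2 / 4 = j * j := by
      have : (2*j)^2 = 4*(j*j) := by ring
      rw [this]; omega
    rw [this]; push_cast; ring
  · rw [h1, h2]
    simp only [Int.natAbs_natCast, Fintype.card_fin]
    have : (2 * j) ^ 2 / 4 = j * j := by
      have : (2*j)^2 = 4*(j*j) := by ring
      rw [this]; omega
    omega
end

section
/- Let G₁ and G₂ be signed Gauss codes whose sets of crossing labels are disjoint, and let G be the signed Gauss code whose word is the concatenation of the word of G₁ followed by the word of G₂, with the combined sign function. Then the skew pairs of G are exactly the skew pairs of G₁ together with the skew pairs of G₂, and consequently C⁺(G) = C⁺(G₁) + C⁺(G₂) and C⁻(G) = C⁻(G₁) + C⁻(G₂). (This is the additivity of C± under the product of knotoids.) -/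
/-- if `G` is the concatenation of `G₁` and `G₂` (on disjoint crossing
sets, modelled by a sum type: the relative order of occurrences coming from each
`Gᵢ` is preserved, every occurrence from `G₁` precedes every occurrence from `G₂`,
and signs are inherited), then the skew pairs of `G` are exactly those of `G₁`
together with those of `G₂`, and `C±(G) = C±(G₁) + C±(G₂)`. -/
theorem casson_concat_additive {C₁ C₂ : Type}
    [Fintype C₁] [DecidableEq C₁] [Fintype C₂] [DecidableEq C₂]
    (G₁ : GaussCode C₁) (G₂ : GaussCode C₂) (G : GaussCode (C₁ ⊕ C₂))
    (horder₁ : ∀ (c : C₁) (b : Bool) (c' : C₁) (b' : Bool),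
      G.pos (.inl c) b < G.pos (.inl c') b' ↔ G₁.pos c b < G₁.pos c' b')
    (horder₂ : ∀ (c : C₂) (b : Bool) (c' : C₂) (b' : Bool),
      G.pos (.inr c) b < G.pos (.inr c') b' ↔ G₂.pos c b < G₂.pos c' b')
    (hsep : ∀ (c : C₁) (b : Bool) (c' : C₂) (b' : Bool),
      G.pos (.inl c) b < G.pos (.inr c') b')
    (hsign₁ : ∀ c : C₁, G.sign (.inl c) = G₁.sign c)
    (hsign₂ : ∀ c : C₂, G.sign (.inr c) = G₂.sign c) :
    (∀ x y : C₁, (G.UpperSkew (.inl x) (.inl y) ↔ G₁.UpperSkew x y) ∧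
        (G.LowerSkew (.inl x) (.inl y) ↔ G₁.LowerSkew x y)) ∧
    (∀ x y : C₂, (G.UpperSkew (.inr x) (.inr y) ↔ G₂.UpperSkew x y) ∧
        (G.LowerSkew (.inr x) (.inr y) ↔ G₂.LowerSkew x y)) ∧
    (∀ (x : C₁) (y : C₂),
        ¬ G.UpperSkew (.inl x) (.inr y) ∧ ¬ G.UpperSkew (.inr y) (.inl x) ∧
        ¬ G.LowerSkew (.inl x) (.inr y) ∧ ¬ G.LowerSkew (.inr y) (.inl x)) ∧
    G.Cplus = G₁.Cplus + G₂.Cplus ∧ G.Cminus = G₁.Cminus + G₂.Cminus := by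
  have hup₁ : ∀ x y : C₁, G.UpperSkew (.inl x) (.inl y) ↔ G₁.UpperSkew x y := by
    intro x y
    simp only [GaussCode.UpperSkew, horder₁]
  have hlo₁ : ∀ x y : C₁, G.LowerSkew (.inl x) (.inl y) ↔ G₁.LowerSkew x y := by
    intro x y
    simp only [GaussCode.LowerSkew, horder₁]
  have hup₂ : ∀ x y : C₂, G.UpperSkew (.inr x) (.inr y) ↔ G₂.UpperSkew x y := by
    intro x y
    simp only [GaussCode.UpperSkew, horder₂]
  have hlo₂ : ∀ x y : C₂, G.LowerSkew (.inr x) (.inr y) ↔ G₂.LowerSkew x y := by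
    intro x y
    simp only [GaussCode.LowerSkew, horder₂]
  have hmix : ∀ (x : C₁) (y : C₂),
      ¬ G.UpperSkew (.inl x) (.inr y) ∧ ¬ G.UpperSkew (.inr y) (.inl x) ∧
      ¬ G.LowerSkew (.inl x) (.inr y) ∧ ¬ G.LowerSkew (.inr y) (.inl x) := by
    intro x y
    refine ⟨fun h => ?_, fun h => ?_, fun h => ?_, fun h => ?_⟩
    · exact absurd (hsep x false y false) (not_lt.2 h.2.1.le)
    · exact absurd (hsep x false y true) (not_lt.2 h.1.le)
    · exact absurd (hsep x true y true) (not_lt.2 h.2.1.le)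
    · exact absurd (hsep x true y false) (not_lt.2 h.1.le)
  refine ⟨fun x y => ⟨hup₁ x y, hlo₁ x y⟩, fun x y => ⟨hup₂ x y, hlo₂ x y⟩, hmix, ?_, ?_⟩
  · simp only [GaussCode.Cplus, GaussCode.Pplus, Finset.sum_filter,
      Fintype.sum_prod_type, Fintype.sum_sum_type]
    have z1 : ∀ x : C₁, (∑ y : C₂, if G.UpperSkew (Sum.inl x) (Sum.inr y)
        then G₁.sign x * G₂.sign y else 0) = 0 :=
      fun x => Finset.sum_eq_zero fun y _ => if_neg (hmix x y).1
    have z2 : ∀ y : C₂, (∑ x : C₁, if G.UpperSkew (Sum.inr y) (Sum.inl x)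
        then G₂.sign y * G₁.sign x else 0) = 0 :=
      fun y => Finset.sum_eq_zero fun x _ => if_neg (hmix x y).2.1
    simp only [z1, z2, add_zero, zero_add, hup₁, hup₂, hsign₁, hsign₂]
  · simp only [GaussCode.Cminus, GaussCode.Pminus, Finset.sum_filter,
      Fintype.sum_prod_type, Fintype.sum_sum_type]
    have z1 : ∀ x : C₁, (∑ y : C₂, if G.LowerSkew (Sum.inl x) (Sum.inr y)
        then G₁.sign x * G₂.sign y else 0) = 0 :=
      fun x => Finset.sum_eq_zero fun y _ => if_neg (hmix x y).2.2.1
    have z2 : ∀ y : C₂, (∑ x : C₁, if G.LowerSkew (Sum.inr y) (Sum.inl x)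
        then G₂.sign y * G₁.sign x else 0) = 0 :=
      fun y => Finset.sum_eq_zero fun x _ => if_neg (hmix x y).2.2.2
    simp only [z1, z2, add_zero, zero_add, hlo₁, hlo₂, hsign₁, hsign₂]
end

section
/- Let G be a signed Gauss code, let x be a crossing of G with x⁺ < x⁻, let s = ε(x), and let G′ be obtained from G by switching the crossing x. Then C⁺(G) − C⁺(G′) = s · Σ ε(y), where the sum ranges over all crossings y ≠ x such that exactly one of the two occurrences of y lies strictly between x⁺ and x⁻ in the word of G and that occurrence is the under-occurrence y⁻. (This is the upper skein relation for the Casson-type invariant of knotoids.) -/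
/-- upper skein relation: let `x` be a crossing of `G` with
`x⁺ < x⁻`, `s = ε(x)`, and let `G′` be obtained from `G` by switching `x`
(interchanging the markers of the two occurrences of `x` and negating `ε(x)`).
Then `C⁺(G) − C⁺(G′) = s · Σ ε(y)`, the sum over all crossings `y ≠ x` such that
exactly one occurrence of `y` lies strictly between `x⁺` and `x⁻` and that
occurrence is `y⁻`. -/
theorem casson_upper_skein {C : Type} [Fintype C] [DecidableEq C]
    (G G' : GaussCode C) (x : C)
    (hx : G.pos x true < G.pos x false)
    (hpos_x : ∀ b : Bool, G'.pos x b = G.pos x (!b))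
    (hpos : ∀ y : C, y ≠ x → ∀ b : Bool, G'.pos y b = G.pos y b)
    (hsign_x : G'.sign x = - G.sign x)
    (hsign : ∀ y : C, y ≠ x → G'.sign y = G.sign y) :
    G.Cplus - G'.Cplus =
      G.sign x * ∑ y ∈ Finset.univ.filter (fun y : C => y ≠ x ∧
          (G.pos x true < G.pos y false ∧ G.pos y false < G.pos x false) ∧
          ¬ (G.pos x true < G.pos y true ∧ G.pos y true < G.pos x false)),
        G.sign y := by
  classical
  have key : ∀ a b : C,
      (if G.UpperSkew a b then G.sign a * G.sign b else 0)
        - (if G'.UpperSkew a b then G'.sign a * G'.sign b else 0)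
      = (if a = x then (if G.UpperSkew x b then G.sign x * G.sign b else 0) else 0)
        + (if b = x then (if G'.UpperSkew a x then G.sign x * G.sign a else 0) else 0) := by
    intro a b
    by_cases ha : a = x <;> by_cases hb : b = x
    · have h1 : ¬ G.UpperSkew x x := by
        simp only [GaussCode.UpperSkew]; omega
      have h2 : ¬ G'.UpperSkew x x := by
        simp only [GaussCode.UpperSkew, hpos_x, Bool.not_true, Bool.not_false]; omega
      simp [ha, hb, h1, h2]
    · have h2 : ¬ G'.UpperSkew x b := by
        simp only [GaussCode.UpperSkew, hpos_x, hpos b hb, Bool.not_true, Bool.not_false]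
        omega
      simp [ha, hb, h2]
    · have h1 : ¬ G.UpperSkew a x := by
        simp only [GaussCode.UpperSkew]; omega
      simp only [ha, hb, h1, hsign a ha, hsign_x, if_neg, if_false, if_pos, if_true]
      by_cases h : G'.UpperSkew a x <;> simp [h, ha] <;> ring
    · have hiff : G'.UpperSkew a b ↔ G.UpperSkew a b := by
        simp only [GaussCode.UpperSkew, hpos a ha, hpos b hb]
      simp [ha, hb, hiff, hsign a ha, hsign b hb]
  have hC : G.Cplus = ∑ a : C, ∑ b : C,
      (if G.UpperSkew a b then G.sign a * G.sign b else 0) := by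
    rw [GaussCode.Cplus, GaussCode.Pplus, Finset.sum_filter, ← Finset.univ_product_univ,
      Finset.sum_product]
  have hC' : G'.Cplus = ∑ a : C, ∑ b : C,
      (if G'.UpperSkew a b then G'.sign a * G'.sign b else 0) := by
    rw [GaussCode.Cplus, GaussCode.Pplus, Finset.sum_filter, ← Finset.univ_product_univ,
      Finset.sum_product]
  rw [hC, hC', ← Finset.sum_sub_distrib]
  have step : ∀ a : C,
      (∑ b : C, (if G.UpperSkew a b then G.sign a * G.sign b else 0))
        - (∑ b : C, (if G'.UpperSkew a b then G'.sign a * G'.sign b else 0))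
      = (if a = x then (∑ b : C, if G.UpperSkew x b then G.sign x * G.sign b else 0) else 0)
        + (if G'.UpperSkew a x then G.sign x * G.sign a else 0) := by
    intro a
    rw [← Finset.sum_sub_distrib,
      Finset.sum_congr rfl (fun b _ => key a b), Finset.sum_add_distrib]
    congr 1
    · by_cases ha : a = x <;> simp [ha]
    · simp
  rw [Finset.sum_congr rfl (fun a _ => step a), Finset.sum_add_distrib]
  simp only [Finset.sum_ite_eq', Finset.mem_univ, if_true]
  rw [Finset.mul_sum, Finset.sum_filter, ← Finset.sum_add_distrib]
  refine Finset.sum_congr rfl (fun y _ => ?_)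
  by_cases hy : y = x
  · have h1 : ¬ G.UpperSkew x x := by simp only [GaussCode.UpperSkew]; omega
    have h2 : ¬ G'.UpperSkew x x := by
      simp only [GaussCode.UpperSkew, hpos_x, Bool.not_true, Bool.not_false]; omega
    simp [hy, h1, h2]
  · have n1 : G.pos y true ≠ G.pos x true := by
      intro h
      have := G.inj (a₁ := (y, true)) (a₂ := (x, true)) h
      exact hy (congrArg Prod.fst this)
    have n2 : G.pos y true ≠ G.pos x false := by
      intro h
      have := G.inj (a₁ := (y, true)) (a₂ := (x, false)) h
      simpa using congrArg Prod.snd this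
    have h2iff : G'.UpperSkew y x ↔
        (G.pos y true < G.pos x true ∧ G.pos x true < G.pos y false ∧
          G.pos y false < G.pos x false) := by
      simp only [GaussCode.UpperSkew, hpos y hy, hpos_x, Bool.not_true, Bool.not_false]
    simp only [h2iff]
    simp only [GaussCode.UpperSkew]
    by_cases c1 : G.pos x true < G.pos y false ∧ G.pos y false < G.pos x false ∧
        G.pos x false < G.pos y true
    · erw [if_pos c1, if_neg (show ¬ (G.pos y true < G.pos x true ∧
          G.pos x true < G.pos y false ∧ G.pos y false < G.pos x false) by omega),
        if_pos (show y ≠ x ∧ (G.pos x true < G.pos y false ∧ G.pos y false < G.pos x false) ∧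
          ¬ (G.pos x true < G.pos y true ∧ G.pos y true < G.pos x false) from
          ⟨hy, by omega, by omega⟩)]
      ring
    · erw [if_neg c1]
      by_cases c2 : G.pos y true < G.pos x true ∧ G.pos x true < G.pos y false ∧
          G.pos y false < G.pos x false
      · rw [if_pos c2,
          if_pos (show y ≠ x ∧ (G.pos x true < G.pos y false ∧ G.pos y false < G.pos x false) ∧
            ¬ (G.pos x true < G.pos y true ∧ G.pos y true < G.pos x false) from
            ⟨hy, by omega, by omega⟩)]
        ring
      · rw [if_neg c2,
          if_neg (show ¬ (y ≠ x ∧ (G.pos x true < G.pos y false ∧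
              G.pos y false < G.pos x false) ∧
            ¬ (G.pos x true < G.pos y true ∧ G.pos y true < G.pos x false)) by
            rintro ⟨-, h, hn⟩; omega)]
        ring
end

section
/- Let G be a signed Gauss code, let x be a crossing of G with x⁺ < x⁻, let s = ε(x), and let G′ be obtained from G by switching the crossing x. Then C⁻(G) − C⁻(G′) = s · Σ ε(y), where the sum ranges over all crossings y ≠ x such that exactly one of the two occurrences of y lies strictly between x⁺ and x⁻ in the word of G and that occurrence is the over-occurrence y⁺. (This is the lower skein relation for the Casson-type invariant of knotoids.) -/
/-- lower skein relation: let `x` be a crossing of `G` with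
`x⁺ < x⁻`, `s = ε(x)`, and let `G′` be obtained from `G` by switching `x`
(interchanging the markers of the two occurrences of `x` and negating `ε(x)`).
Then `C⁻(G) − C⁻(G′) = s · Σ ε(y)`, the sum over all crossings `y ≠ x` such that
exactly one occurrence of `y` lies strictly between `x⁺` and `x⁻` and that
occurrence is `y⁺`. -/
theorem casson_lower_skein {C : Type} [Fintype C] [DecidableEq C]
    (G G' : GaussCode C) (x : C)
    (hx : G.pos x true < G.pos x false)
    (hpos_x : ∀ b : Bool, G'.pos x b = G.pos x (!b))
    (hpos : ∀ y : C, y ≠ x → ∀ b : Bool, G'.pos y b = G.pos y b)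
    (hsign_x : G'.sign x = - G.sign x)
    (hsign : ∀ y : C, y ≠ x → G'.sign y = G.sign y) :
    G.Cminus - G'.Cminus =
      G.sign x * ∑ y ∈ Finset.univ.filter (fun y : C => y ≠ x ∧
          (G.pos x true < G.pos y true ∧ G.pos y true < G.pos x false) ∧
          ¬ (G.pos x true < G.pos y false ∧ G.pos y false < G.pos x false)),
        G.sign y := by
  classical
  have hne : ∀ y : C, y ≠ x → ∀ b b' : Bool, G.pos y b ≠ G.pos x b' := by
    intro y hy b b' h
    exact hy (congrArg Prod.fst (G.inj (a₁ := (y, b)) (a₂ := (x, b')) h))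
  have h't : G'.pos x true = G.pos x false := by simpa using hpos_x true
  have h'f : G'.pos x false = G.pos x true := by simpa using hpos_x false
  set A : C → ℤ := fun y =>
    if y ≠ x ∧ G.pos y false < G.pos x true ∧ G.pos x true < G.pos y true ∧
        G.pos y true < G.pos x false then G.sign x * G.sign y else 0 with hA
  set B : C → ℤ := fun y =>
    if y ≠ x ∧ G.pos x true < G.pos y true ∧ G.pos y true < G.pos x false ∧
        G.pos x false < G.pos y false then G.sign x * G.sign y else 0 with hB
  have key : ∀ p : C × C,
      (if G.LowerSkew p.1 p.2 then G.sign p.1 * G.sign p.2 else 0) -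
        (if G'.LowerSkew p.1 p.2 then G'.sign p.1 * G'.sign p.2 else 0) =
      (if p.2 = x then A p.1 else 0) + (if p.1 = x then B p.2 else 0) := by
    rintro ⟨a, b⟩
    by_cases ha : a = x <;> by_cases hb : b = x
    · rw [ha, hb]
      simp only [GaussCode.LowerSkew, h't, h'f, hA, hB, if_pos rfl, if_true, ne_eq,
        not_true_eq_false, false_and, if_false]
      have c1 : ¬(G.pos x false < G.pos x true ∧ G.pos x true < G.pos x true ∧
          G.pos x true < G.pos x false) := by omega
      have c2 : ¬(G.pos x true < G.pos x false ∧ G.pos x false < G.pos x false ∧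
          G.pos x false < G.pos x true) := by omega
      simp only [c1, c2, if_false]
      simp
    · rw [ha]
      simp only [GaussCode.LowerSkew, h't, h'f, hpos b hb, hsign b hb, hsign_x,
        hA, hB, if_neg hb, if_pos rfl, if_true, ne_eq, hb, not_false_eq_true, true_and,
        eq_self_iff_true, not_true_eq_false, false_and, if_false]
      have c1 : ¬(G.pos x false < G.pos b true ∧ G.pos b true < G.pos x true ∧
          G.pos x true < G.pos b false) := by omega
      simp only [c1, if_false]
      split_ifs <;> (first | ring1 | (exfalso; omega) | simp_all)
    · rw [hb]
      simp only [GaussCode.LowerSkew, h't, h'f, hpos a ha, hsign a ha,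
        hA, hB, if_pos rfl, if_neg ha, if_true, ne_eq, ha, not_false_eq_true, true_and,
        eq_self_iff_true, not_true_eq_false, false_and, if_false]
      have c2 : ¬(G.pos a false < G.pos x false ∧ G.pos x false < G.pos a true ∧
          G.pos a true < G.pos x true) := by omega
      simp only [c2, if_false]
      by_cases hc : G.pos a false < G.pos x true ∧ G.pos x true < G.pos a true ∧ G.pos a true < G.pos x false <;>
        simp only [hc, if_true, if_false] <;> (first | ring1 | (exfalso; omega) | simp_all [mul_comm])
    · simp only [GaussCode.LowerSkew, hpos a ha, hpos b hb, hsign a ha, hsign b hb,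
        if_neg ha, if_neg hb, sub_self, add_zero]
  have hG : G.Cminus = ∑ p : C × C,
      (if G.LowerSkew p.1 p.2 then G.sign p.1 * G.sign p.2 else 0) := by
    simp [GaussCode.Cminus, GaussCode.Pminus, Finset.sum_filter]
  have hG' : G'.Cminus = ∑ p : C × C,
      (if G'.LowerSkew p.1 p.2 then G'.sign p.1 * G'.sign p.2 else 0) := by
    simp [GaussCode.Cminus, GaussCode.Pminus, Finset.sum_filter]
  rw [hG, hG', ← Finset.sum_sub_distrib]
  rw [Finset.sum_congr rfl (fun p _ => key p), Finset.sum_add_distrib]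
  have hA' : (∑ p : C × C, if p.2 = x then A p.1 else 0) = ∑ y : C, A y := by
    rw [Fintype.sum_prod_type]
    exact Finset.sum_congr rfl fun a _ => by simp
  have hB' : (∑ p : C × C, if p.1 = x then B p.2 else 0) = ∑ y : C, B y := by
    rw [Fintype.sum_prod_type_right]
    exact Finset.sum_congr rfl fun b _ => by simp
  rw [hA', hB', ← Finset.sum_add_distrib, Finset.mul_sum, Finset.sum_filter]
  refine Finset.sum_congr rfl fun y _ => ?_
  by_cases hy : y = x
  · subst hy; simp [hA, hB]
  · have hn := hne y hy
    have e1 := hn true true; have e2 := hn true false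
    have e3 := hn false true; have e4 := hn false false
    simp only [hA, hB, ne_eq, hy, not_false_eq_true, true_and]
    split_ifs <;> (first | ring1 | (exfalso; omega) | simp_all)
end

section
/- Let G be a signed Gauss code and let c be a crossing whose two occurrences are adjacent in the word (one immediately follows the other). Then c belongs to no upper and no lower skew pair of G, and if G′ denotes the code obtained from G by deleting both occurrences of c, then C⁺(G′) = C⁺(G) and C⁻(G′) = C⁻(G). (This is invariance of C± under the first Reidemeister move at the Gauss-code level.) -/
namespace GaussCode

variable {C : Type} [Fintype C] [DecidableEq C]

/-- The code obtained by deleting both occurrences of the crossing `c`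
(the remaining occurrences keep their positions and markers, signs are
inherited). -/
def erase (G : GaussCode C) (c : C) : GaussCode {d : C // d ≠ c} where
  pos d b := G.pos d.1 b
  inj := by
    rintro ⟨⟨d, hd⟩, b⟩ ⟨⟨e, he⟩, b'⟩ h
    dsimp only at h
    have h2 := G.inj (a₁ := (d, b)) (a₂ := (e, b')) h
    simp only [Prod.mk.injEq] at h2
    simp only [Prod.mk.injEq, Subtype.mk.injEq]
    exact h2
  sign d := G.sign d.1
  sign_unit d := G.sign_unit d.1

end GaussCode

/-- first Reidemeister move: if the two occurrences of a crossing
`c` are adjacent in the word (no occurrence lies strictly between them), then `c`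
belongs to no skew pair, and deleting both occurrences of `c` leaves `C⁺` and
`C⁻` unchanged. -/
theorem casson_R1_invariance {C : Type} [Fintype C] [DecidableEq C]
    (G : GaussCode C) (c : C)
    (hadj : ∀ (d : C) (b : Bool),
      ¬ (min (G.pos c true) (G.pos c false) < G.pos d b ∧
         G.pos d b < max (G.pos c true) (G.pos c false))) :
    (∀ y : C, ¬ G.UpperSkew c y ∧ ¬ G.UpperSkew y c ∧
        ¬ G.LowerSkew c y ∧ ¬ G.LowerSkew y c) ∧
    (G.erase c).Cplus = G.Cplus ∧ (G.erase c).Cminus = G.Cminus := by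
  have key : ∀ y : C, ¬ G.UpperSkew c y ∧ ¬ G.UpperSkew y c ∧
      ¬ G.LowerSkew c y ∧ ¬ G.LowerSkew y c := by
    intro y
    refine ⟨?_, ?_, ?_, ?_⟩
    · rintro ⟨h1, h2, h3⟩
      exact hadj y false ⟨lt_of_le_of_lt (min_le_left _ _) h1,
        lt_of_lt_of_le h2 (le_max_right _ _)⟩
    · rintro ⟨h1, h2, h3⟩
      exact hadj y false ⟨lt_of_le_of_lt (min_le_right _ _) h2,
        lt_of_lt_of_le h3 (le_max_left _ _)⟩
    · rintro ⟨h1, h2, h3⟩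
      exact hadj y true ⟨lt_of_le_of_lt (min_le_right _ _) h1,
        lt_of_lt_of_le h2 (le_max_left _ _)⟩
    · rintro ⟨h1, h2, h3⟩
      exact hadj y true ⟨lt_of_le_of_lt (min_le_left _ _) h2,
        lt_of_lt_of_le h3 (le_max_right _ _)⟩
  refine ⟨key, ?_, ?_⟩
  · unfold GaussCode.Cplus
    apply Finset.sum_bij (fun (p : {d : C // d ≠ c} × {d : C // d ≠ c}) _ => (p.1.1, p.2.1))
    · intro p hp
      simp only [GaussCode.Pplus, Finset.mem_filter, Finset.mem_univ, true_and] at hp ⊢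
      exact hp
    · rintro ⟨⟨a, _⟩, ⟨b, _⟩⟩ _ ⟨⟨a', _⟩, ⟨b', _⟩⟩ _ h
      simp_all
    · rintro ⟨x, y⟩ hb
      simp only [GaussCode.Pplus, Finset.mem_filter, Finset.mem_univ, true_and] at hb
      have hx : x ≠ c := fun h => (key y).1 (h ▸ hb)
      have hy : y ≠ c := fun h => (key x).2.1 (h ▸ hb)
      exact ⟨(⟨x, hx⟩, ⟨y, hy⟩), by
        simp only [GaussCode.Pplus, Finset.mem_filter, Finset.mem_univ, true_and]; exact hb, rfl⟩
    · intro p _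
      rfl
  · unfold GaussCode.Cminus
    apply Finset.sum_bij (fun (p : {d : C // d ≠ c} × {d : C // d ≠ c}) _ => (p.1.1, p.2.1))
    · intro p hp
      simp only [GaussCode.Pminus, Finset.mem_filter, Finset.mem_univ, true_and] at hp ⊢
      exact hp
    · rintro ⟨⟨a, _⟩, ⟨b, _⟩⟩ _ ⟨⟨a', _⟩, ⟨b', _⟩⟩ _ h
      simp_all
    · rintro ⟨x, y⟩ hb
      simp only [GaussCode.Pminus, Finset.mem_filter, Finset.mem_univ, true_and] at hb
      have hx : x ≠ c := fun h => (key y).2.2.1 (h ▸ hb)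
      have hy : y ≠ c := fun h => (key x).2.2.2 (h ▸ hb)
      exact ⟨(⟨x, hx⟩, ⟨y, hy⟩), by
        simp only [GaussCode.Pminus, Finset.mem_filter, Finset.mem_univ, true_and]; exact hb, rfl⟩
    · intro p _
      rfl
end

section
/- Let G be a signed Gauss code containing distinct crossings x and y such that the occurrence y⁺ immediately follows x⁺ and the occurrence y⁻ immediately follows x⁻ in the word. Then: (a) neither (x, y) nor (y, x) is a skew pair of G; and (b) for every crossing z ∉ {x, y}, the pair (x, z) is an upper (resp. lower) skew pair if and only if (y, z) is an upper (resp. lower) skew pair, and the pair (z, x) is an upper (resp. lower) skew pair if and only if (z, y) is an upper (resp. lower) skew pair. -/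
/-- if `y⁺` immediately follows `x⁺` and `y⁻` immediately follows
`x⁻` in the word, then (a) neither `(x, y)` nor `(y, x)` is a skew pair, and
(b) for every crossing `z ∉ {x, y}`, `(x, z)` is an upper (resp. lower) skew pair
iff `(y, z)` is, and `(z, x)` is an upper (resp. lower) skew pair iff `(z, y)` is. -/
theorem casson_R2_configuration {C : Type} [Fintype C] [DecidableEq C]
    (G : GaussCode C) (x y : C) (hxy : x ≠ y)
    (himm_over : G.Imm (G.pos x true) (G.pos y true))
    (himm_under : G.Imm (G.pos x false) (G.pos y false)) :
    (¬ G.UpperSkew x y ∧ ¬ G.UpperSkew y x ∧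
      ¬ G.LowerSkew x y ∧ ¬ G.LowerSkew y x) ∧
    (∀ z : C, z ≠ x → z ≠ y →
      (G.UpperSkew x z ↔ G.UpperSkew y z) ∧ (G.LowerSkew x z ↔ G.LowerSkew y z) ∧
      (G.UpperSkew z x ↔ G.UpperSkew z y) ∧ (G.LowerSkew z x ↔ G.LowerSkew z y)) := by

  obtain ⟨ho, hno⟩ := himm_over
  obtain ⟨hu, hnu⟩ := himm_under
  constructor
  · refine ⟨?_, ?_, ?_, ?_⟩ <;> rintro ⟨a, b, c⟩ <;> linarith
  · intro z hzx hzy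
    have hne : ∀ (b b' : Bool) (w : C), z ≠ w → G.pos z b ≠ G.pos w b' := by
      intro b b' w hw h
      exact hw (congrArg Prod.fst (G.inj (a₁ := (z, b)) (a₂ := (w, b')) h))
    have key : ∀ (b : Bool), (G.pos z b < G.pos x true ∨ G.pos y true < G.pos z b) ∧
        (G.pos z b < G.pos x false ∨ G.pos y false < G.pos z b) := by
      intro b
      constructor
      · have h1 := hno z b
        have h2 := hne b true x hzx
        have h3 := hne b true y hzy
        push_neg at h1
        rcases lt_trichotomy (G.pos z b) (G.pos x true) with h | h | h
        · exact Or.inl h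
        · exact absurd h h2
        · right
          rcases lt_trichotomy (G.pos z b) (G.pos y true) with h' | h' | h'
          · linarith [h1 h]
          · exact absurd h' h3
          · exact h'
      · have h1 := hnu z b
        have h2 := hne b false x hzx
        have h3 := hne b false y hzy
        push_neg at h1
        rcases lt_trichotomy (G.pos z b) (G.pos x false) with h | h | h
        · exact Or.inl h
        · exact absurd h h2
        · right
          rcases lt_trichotomy (G.pos z b) (G.pos y false) with h' | h' | h'
          · linarith [h1 h]
          · exact absurd h' h3
          · exact h'
    obtain ⟨kt1, kt2⟩ := key true
    obtain ⟨kf1, kf2⟩ := key false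
    refine ⟨?_, ?_, ?_, ?_⟩ <;>
      constructor <;>
      rintro ⟨a, b, c⟩ <;>
      rcases kt1 with k1 | k1 <;> rcases kt2 with k2 | k2 <;>
      rcases kf1 with k3 | k3 <;> rcases kf2 with k4 | k4 <;>
      exact ⟨by linarith, by linarith, by linarith⟩
end

section
/- Let G be a signed Gauss code containing distinct crossings x and y with ε(y) = −ε(x), such that the occurrence y⁺ immediately follows x⁺ and the occurrence y⁻ immediately follows x⁻ in the word. Let G′ be the code obtained from G by deleting all four occurrences of x and y. Then C⁺(G′) = C⁺(G) and C⁻(G′) = C⁻(G). (This is invariance of C± under the second Reidemeister move at the Gauss-code level.) -/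
namespace GaussCode

variable {C : Type} [Fintype C] [DecidableEq C]

/-- The code obtained by deleting all four occurrences of the crossings `x` and
`y` (the remaining occurrences keep their positions and markers, signs are
inherited). -/
def erase2 (G : GaussCode C) (x y : C) : GaussCode {d : C // d ≠ x ∧ d ≠ y} where
  pos d b := G.pos d.1 b
  inj := by
    rintro ⟨⟨d, hd⟩, b⟩ ⟨⟨e, he⟩, b'⟩ h
    dsimp only at h
    have h2 := G.inj (a₁ := (d, b)) (a₂ := (e, b')) h
    simp only [Prod.mk.injEq] at h2
    simp only [Prod.mk.injEq, Subtype.mk.injEq]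
    exact h2
  sign d := G.sign d.1
  sign_unit d := G.sign_unit d.1

end GaussCode

section R2aux

variable {C : Type} [Fintype C] [DecidableEq C]

private lemma pos_ne' (G : GaussCode C) {d e : C} {b b' : Bool} (h : d ≠ e) :
    G.pos d b ≠ G.pos e b' := by
  intro hc
  have h2 := G.inj (a₁ := (d, b)) (a₂ := (e, b')) hc
  simp only [Prod.mk.injEq] at h2
  exact h h2.1

private lemma sides' (G : GaussCode C) {p q : ℤ} (h : G.Imm p q) {d : C} {b : Bool}
    (hne : G.pos d b ≠ p) (hne' : G.pos d b ≠ q) :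
    G.pos d b < p ∨ q < G.pos d b := by
  rcases lt_or_gt_of_ne hne with h1 | h1
  · exact Or.inl h1
  rcases lt_or_gt_of_ne hne' with h2 | h2
  · exact absurd ⟨h1, h2⟩ (h.2 d b)
  · exact Or.inr h2

private lemma cmp_iff (G : GaussCode C) {x y : C}
    (himm : ∀ b, G.Imm (G.pos x b) (G.pos y b))
    {d : C} (hdx : d ≠ x) (hdy : d ≠ y) (b b' : Bool) :
    (G.pos d b < G.pos x b' ↔ G.pos d b < G.pos y b') ∧
    (G.pos x b' < G.pos d b ↔ G.pos y b' < G.pos d b) := by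
  have hlt := (himm b').1
  have hs := sides' G (himm b') (b := b) (pos_ne' G hdx) (pos_ne' G hdy)
  constructor <;> constructor <;> intro h <;> rcases hs with h' | h' <;> omega

private lemma sum_skew (G : GaussCode C) {x y : C} (hxy : x ≠ y)
    (hsx : G.sign y = -G.sign x)
    (S : C → C → Prop) [inst : DecidableRel S]
    (hS1 : ∀ d, d ≠ x → d ≠ y → (S x d ↔ S y d))
    (hS2 : ∀ d, d ≠ x → d ≠ y → (S d x ↔ S d y))
    (hS3 : ∀ a b, (a = x ∨ a = y) → (b = x ∨ b = y) → ¬ S a b) :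
    (∑ p ∈ Finset.univ.filter
        (fun p : {d : C // d ≠ x ∧ d ≠ y} × {d : C // d ≠ x ∧ d ≠ y} => S p.1.1 p.2.1),
        G.sign p.1.1 * G.sign p.2.1)
    = ∑ p ∈ Finset.univ.filter (fun p : C × C => S p.1 p.2),
        G.sign p.1 * G.sign p.2 := by
  classical
  set f : C × C → ℤ := fun p => if S p.1 p.2 then G.sign p.1 * G.sign p.2 else 0 with hf
  have hsxy : G.sign x = -G.sign y := by omega
  set σ : C → C := fun c => if c = x then y else if c = y then x else c with hσ
  have hσx : σ x = y := by simp [hσ]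
  have hσy : σ y = x := by simp [hσ, hxy.symm, Ne.symm hxy]
  have hσid : ∀ c, c ≠ x → c ≠ y → σ c = c := by
    intro c h1 h2; simp [hσ, h1, h2]
  have hσσ : ∀ c, σ (σ c) = c := by
    intro c
    by_cases h1 : c = x
    · rw [h1, hσx, hσy]
    by_cases h2 : c = y
    · rw [h2, hσy, hσx]
    · rw [hσid c h1 h2, hσid c h1 h2]
  -- rewrite LHS as a sum over the filtered set of pairs in C × C
  have step1 : (∑ p ∈ Finset.univ.filter
        (fun p : {d : C // d ≠ x ∧ d ≠ y} × {d : C // d ≠ x ∧ d ≠ y} => S p.1.1 p.2.1),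
        G.sign p.1.1 * G.sign p.2.1)
      = ∑ p ∈ Finset.univ.filter
          (fun p : C × C => (p.1 ≠ x ∧ p.1 ≠ y) ∧ (p.2 ≠ x ∧ p.2 ≠ y)), f p := by
    have hmem : ∀ p : C × C, p ∈ Finset.univ.filter
        (fun p : C × C => (p.1 ≠ x ∧ p.1 ≠ y) ∧ (p.2 ≠ x ∧ p.2 ≠ y)) ↔
        ((p.1 ≠ x ∧ p.1 ≠ y) ∧ (p.2 ≠ x ∧ p.2 ≠ y)) := by
      intro p; simp
    rw [Finset.sum_filter]
    rw [Finset.sum_subtype _ hmem f]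
    exact (Fintype.sum_equiv
      (Equiv.subtypeProdEquivProd (p := fun d : C => d ≠ x ∧ d ≠ y)
        (q := fun d : C => d ≠ x ∧ d ≠ y)) (fun q => f q.1)
      (fun a => if S a.1.1 a.2.1 then G.sign a.1.1 * G.sign a.2.1 else 0)
      (fun q => rfl)).symm
  rw [step1]
  -- rewrite RHS as a full sum and split
  rw [Finset.sum_filter (fun p : C × C => S p.1 p.2)]
  show _ = ∑ p : C × C, f p
  rw [← Finset.sum_filter_add_sum_filter_not Finset.univ
      (fun p : C × C => (p.1 ≠ x ∧ p.1 ≠ y) ∧ (p.2 ≠ x ∧ p.2 ≠ y)) f]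
  have hzero : (∑ p ∈ Finset.univ.filter
      (fun p : C × C => ¬ ((p.1 ≠ x ∧ p.1 ≠ y) ∧ (p.2 ≠ x ∧ p.2 ≠ y))), f p) = 0 := by
    apply Finset.sum_involution (fun p _ => (σ p.1, σ p.2))
    · -- f p + f (τ p) = 0
      intro p hp
      simp only [Finset.mem_filter, Finset.mem_univ, true_and] at hp
      by_cases ha : p.1 = x ∨ p.1 = y
      · by_cases hb : p.2 = x ∨ p.2 = y
        · have h1 : ¬ S p.1 p.2 := hS3 _ _ ha hb
          have ha' : σ p.1 = x ∨ σ p.1 = y := by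
            rcases ha with h | h <;> rw [h] <;> simp [hσx, hσy]
          have hb' : σ p.2 = x ∨ σ p.2 = y := by
            rcases hb with h | h <;> rw [h] <;> simp [hσx, hσy]
          have h2 : ¬ S (σ p.1) (σ p.2) := hS3 _ _ ha' hb'
          simp [hf, h1, h2]
        · push_neg at hb
          have hσ2 : σ p.2 = p.2 := hσid _ hb.1 hb.2
          have hiff : S (σ p.1) (σ p.2) ↔ S p.1 p.2 := by
            rw [hσ2]
            rcases ha with h | h
            · rw [h, hσx]; exact (hS1 _ hb.1 hb.2).symm
            · rw [h, hσy]; exact hS1 _ hb.1 hb.2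
          have hsgn : G.sign (σ p.1) = -G.sign p.1 := by
            rcases ha with h | h
            · rw [h, hσx]; exact hsx
            · rw [h, hσy]; exact hsxy
          by_cases hS : S p.1 p.2
          · simp only [hf]
            rw [if_pos hS, if_pos (hiff.mpr hS), hsgn, hσ2]
            ring
          · simp [hf, hS, hiff]
      · have hb : p.2 = x ∨ p.2 = y := by tauto
        push_neg at ha
        have hσ1 : σ p.1 = p.1 := hσid _ ha.1 ha.2
        have hiff : S (σ p.1) (σ p.2) ↔ S p.1 p.2 := by
          rw [hσ1]
          rcases hb with h | h
          · rw [h, hσx]; exact (hS2 _ ha.1 ha.2).symm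
          · rw [h, hσy]; exact hS2 _ ha.1 ha.2
        have hsgn : G.sign (σ p.2) = -G.sign p.2 := by
          rcases hb with h | h
          · rw [h, hσx]; exact hsx
          · rw [h, hσy]; exact hsxy
        by_cases hS : S p.1 p.2
        · simp only [hf]
          rw [if_pos hS, if_pos (hiff.mpr hS), hsgn, hσ1]
          ring
        · simp [hf, hS, hiff]
    · -- τ p ≠ p
      intro p hp _
      simp only [Finset.mem_filter, Finset.mem_univ, true_and] at hp
      intro heq
      have h1 : σ p.1 = p.1 := congrArg Prod.fst heq
      have h2 : σ p.2 = p.2 := congrArg Prod.snd heq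
      by_cases ha : p.1 = x ∨ p.1 = y
      · rcases ha with h | h
        · rw [h, hσx] at h1; exact hxy h1.symm
        · rw [h, hσy] at h1; exact hxy h1
      · have hb : p.2 = x ∨ p.2 = y := by tauto
        rcases hb with h | h
        · rw [h, hσx] at h2; exact hxy h2.symm
        · rw [h, hσy] at h2; exact hxy h2
    · -- τ p ∈ T
      intro p hp
      simp only [Finset.mem_filter, Finset.mem_univ, true_and] at hp ⊢
      by_cases ha : p.1 = x ∨ p.1 = y
      · rcases ha with h | h <;> rw [h] <;> simp [hσx, hσy]
      · have hb : p.2 = x ∨ p.2 = y := by tauto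
        rcases hb with h | h <;> rw [h] <;> simp [hσx, hσy]
    · -- involution
      intro p hp
      simp [hσσ]
  omega

end R2aux

/-- second Reidemeister move: if `x ≠ y` are crossings with
`ε(y) = −ε(x)` such that `y⁺` immediately follows `x⁺` and `y⁻` immediately
follows `x⁻` in the word, then deleting all four occurrences of `x` and `y`
leaves `C⁺` and `C⁻` unchanged. -/
theorem casson_R2_invariance {C : Type} [Fintype C] [DecidableEq C]
    (G : GaussCode C) (x y : C) (hxy : x ≠ y)
    (hsign : G.sign y = - G.sign x)
    (himm_over : G.Imm (G.pos x true) (G.pos y true))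
    (himm_under : G.Imm (G.pos x false) (G.pos y false)) :
    (G.erase2 x y).Cplus = G.Cplus ∧ (G.erase2 x y).Cminus = G.Cminus := by
  classical
  have himm : ∀ b, G.Imm (G.pos x b) (G.pos y b) := by
    intro b; cases b
    · exact himm_under
    · exact himm_over
  constructor
  · have h := sum_skew G hxy hsign G.UpperSkew
      (fun d hdx hdy => by
        have c := cmp_iff G himm hdx hdy
        unfold GaussCode.UpperSkew
        rw [(c false true).2, (c false false).1, (c true false).2])
      (fun d hdx hdy => by
        have c := cmp_iff G himm hdx hdy
        unfold GaussCode.UpperSkew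
        rw [(c true false).1, (c false false).2, (c false true).1])
      (fun a b ha hb => by
        have h1 := (himm true).1
        have h2 := (himm false).1
        rintro ⟨k1, k2, k3⟩
        rcases ha with h | h <;> rcases hb with h' | h' <;> rw [h, h'] at k1 k2 k3
        · omega
        · exact (himm true).2 x false ⟨by omega, k3⟩
        · omega
        · omega)
    have hL : (G.erase2 x y).Cplus = ∑ p ∈ Finset.univ.filter
        (fun p : {d : C // d ≠ x ∧ d ≠ y} × {d : C // d ≠ x ∧ d ≠ y} =>
          G.UpperSkew p.1.1 p.2.1), G.sign p.1.1 * G.sign p.2.1 := by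
      unfold GaussCode.Cplus GaussCode.Pplus
      rw [Finset.sum_filter, Finset.sum_filter]
      rfl
    have hR : G.Cplus = ∑ p ∈ Finset.univ.filter
        (fun p : C × C => G.UpperSkew p.1 p.2), G.sign p.1 * G.sign p.2 := by
      unfold GaussCode.Cplus GaussCode.Pplus
      rw [Finset.sum_filter]
    rw [hL, hR]
    exact h
  · have h := sum_skew G hxy hsign G.LowerSkew
      (fun d hdx hdy => by
        have c := cmp_iff G himm hdx hdy
        unfold GaussCode.LowerSkew
        rw [(c true false).2, (c true true).1, (c false true).2])
      (fun d hdx hdy => by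
        have c := cmp_iff G himm hdx hdy
        unfold GaussCode.LowerSkew
        rw [(c false true).1, (c true true).2, (c true false).1])
      (fun a b ha hb => by
        have h1 := (himm true).1
        have h2 := (himm false).1
        rintro ⟨k1, k2, k3⟩
        rcases ha with h | h <;> rcases hb with h' | h' <;> rw [h, h'] at k1 k2 k3
        · omega
        · omega
        · omega
        · omega)
    have hL : (G.erase2 x y).Cminus = ∑ p ∈ Finset.univ.filter
        (fun p : {d : C // d ≠ x ∧ d ≠ y} × {d : C // d ≠ x ∧ d ≠ y} =>
          G.LowerSkew p.1.1 p.2.1), G.sign p.1.1 * G.sign p.2.1 := by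
      unfold GaussCode.Cminus GaussCode.Pminus
      rw [Finset.sum_filter, Finset.sum_filter]
      rfl
    have hR : G.Cminus = ∑ p ∈ Finset.univ.filter
        (fun p : C × C => G.LowerSkew p.1 p.2), G.sign p.1 * G.sign p.2 := by
      unfold GaussCode.Cminus GaussCode.Pminus
      rw [Finset.sum_filter]
    rw [hL, hR]
    exact h
end

section
/- Let G be a signed Gauss code containing three distinct crossings x, y, z with ε(x) = ε(z) = −ε(y), whose word contains the three two-entry blocks x⁺y⁺, y⁻z⁻ and z⁺x⁻ (each block occupying two consecutive positions, the three blocks pairwise disjoint and appearing in any relative order in the word). Let G′ be the code obtained from G by transposing the two entries within each of these three blocks (producing the blocks y⁺x⁺, z⁻y⁻ and x⁻z⁺), keeping all crossing signs unchanged. Then C⁺(G′) = C⁺(G) and C⁻(G′) = C⁻(G). (This is invariance of C± under the third Reidemeister move at the Gauss-code level.) -/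
private lemma sum_split6 {C : Type} [Fintype C] [DecidableEq C] (x y z : C)
    (hxy : x ≠ y) (hyz : y ≠ z) (hxz : x ≠ z) (f g : C × C → ℤ)
    (hout : ∀ p : C × C, p ≠ (x,y) → p ≠ (y,x) → p ≠ (y,z) → p ≠ (z,y) → p ≠ (x,z) → p ≠ (z,x) → f p = g p)
    (hin : f (x,y) + f (y,x) + f (y,z) + f (z,y) + f (x,z) + f (z,x)
         = g (x,y) + g (y,x) + g (y,z) + g (z,y) + g (x,z) + g (z,x)) :
    ∑ p : C × C, f p = ∑ p : C × C, g p := by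
  classical
  set S : Finset (C × C) := {(x,y),(y,x),(y,z),(z,y),(x,z),(z,x)} with hS
  have hexp : ∑ p ∈ S, (f p - g p)
      = (f (x,y) - g (x,y)) + (f (y,x) - g (y,x)) + (f (y,z) - g (y,z))
      + (f (z,y) - g (z,y)) + (f (x,z) - g (x,z)) + (f (z,x) - g (z,x)) := by
    rw [hS]
    rw [Finset.sum_insert (by simp [hxy, hyz, hxz, hxy.symm, hyz.symm, hxz.symm]),
        Finset.sum_insert (by simp [hxy, hyz, hxz, hxy.symm, hyz.symm, hxz.symm]),
        Finset.sum_insert (by simp [hxy, hyz, hxz, hxy.symm, hyz.symm, hxz.symm]),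
        Finset.sum_insert (by simp [hxy, hyz, hxz, hxy.symm, hyz.symm, hxz.symm]),
        Finset.sum_insert (by simp [hxy, hyz, hxz, hxy.symm, hyz.symm, hxz.symm]),
        Finset.sum_singleton]
    ring
  have hsub : ∑ p ∈ S, (f p - g p) = ∑ p : C × C, (f p - g p) := by
    apply Finset.sum_subset (Finset.subset_univ S)
    intro p _ hp
    simp only [hS, Finset.mem_insert, Finset.mem_singleton, not_or] at hp
    rw [hout p hp.1 hp.2.1 hp.2.2.1 hp.2.2.2.1 hp.2.2.2.2.1 hp.2.2.2.2.2, sub_self]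
  have h0 : ∑ p : C × C, (f p - g p) = 0 := by
    rw [← hsub, hexp]
    linarith [hin]
  have hdist : ∑ p : C × C, (f p - g p) = (∑ p : C × C, f p) - ∑ p : C × C, g p :=
    Finset.sum_sub_distrib f g
  linarith [hdist, h0]

private lemma skew_iff {C : Type} [Fintype C] [DecidableEq C]
    (G G' : GaussCode C) (x y z : C)
    (hb1 : G.Imm (G.pos x true) (G.pos y true))
    (hb2 : G.Imm (G.pos y false) (G.pos z false))
    (hb3 : G.Imm (G.pos z true) (G.pos x false))
    (ht1 : G'.pos y true = G.pos x true ∧ G'.pos x true = G.pos y true)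
    (ht2 : G'.pos z false = G.pos y false ∧ G'.pos y false = G.pos z false)
    (ht3 : G'.pos x false = G.pos z true ∧ G'.pos z true = G.pos x false)
    (helse : ∀ d : C, d ≠ x → d ≠ y → d ≠ z → ∀ b : Bool, G'.pos d b = G.pos d b) :
    ∀ p : C × C, p ≠ (x,y) → p ≠ (y,x) → p ≠ (y,z) → p ≠ (z,y) → p ≠ (x,z) → p ≠ (z,x) →
      (G'.UpperSkew p.1 p.2 ↔ G.UpperSkew p.1 p.2) ∧
      (G'.LowerSkew p.1 p.2 ↔ G.LowerSkew p.1 p.2) := by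
  have hne : ∀ (c c' : C) (b b' : Bool), (c, b) ≠ (c', b') → G.pos c b ≠ G.pos c' b' := by
    intro c c' b b' h hh
    exact h (G.inj (show (fun p : C × Bool => G.pos p.1 p.2) (c,b)
      = (fun p : C × Bool => G.pos p.1 p.2) (c',b') from hh))
  have I1 := hb1.1
  have I2 := hb2.1
  have I3 := hb3.1
  have hne6 : ∀ (e : C), e ≠ x → e ≠ y → e ≠ z → ∀ b : Bool,
      G.pos e b ≠ G.pos x true ∧ G.pos e b ≠ G.pos y true ∧ G.pos e b ≠ G.pos y false ∧
      G.pos e b ≠ G.pos z false ∧ G.pos e b ≠ G.pos z true ∧ G.pos e b ≠ G.pos x false := by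
    intro e h1 h2 h3 b
    exact ⟨hne _ _ _ _ (by simp [h1]), hne _ _ _ _ (by simp [h2]), hne _ _ _ _ (by simp [h2]),
           hne _ _ _ _ (by simp [h3]), hne _ _ _ _ (by simp [h3]), hne _ _ _ _ (by simp [h1])⟩
  have nb6 : ∀ (e : C) (b : Bool),
      (¬(G.pos x true < G.pos e b ∧ G.pos e b < G.pos y true)) ∧
      (¬(G.pos y false < G.pos e b ∧ G.pos e b < G.pos z false)) ∧
      (¬(G.pos z true < G.pos e b ∧ G.pos e b < G.pos x false)) :=
    fun e b => ⟨hb1.2 e b, hb2.2 e b, hb3.2 e b⟩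
  rintro ⟨d, e⟩ q1 q2 q3 q4 q5 q6
  simp only [ne_eq, Prod.mk.injEq, not_and] at q1 q2 q3 q4 q5 q6
  by_cases hdx : d = x
  · by_cases hex : e = x
    · simp only [GaussCode.UpperSkew, GaussCode.LowerSkew, hdx, hex]
      omega
    · have hey : e ≠ y := q1 hdx
      have hez : e ≠ z := q5 hdx
      have he := helse e hex hey hez
      have M1 := hne6 e hex hey hez true
      have M2 := hne6 e hex hey hez false
      have B1 := nb6 e true
      have B2 := nb6 e false
      simp only [GaussCode.UpperSkew, GaussCode.LowerSkew, hdx, ht1.2, ht3.1, he]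
      omega
  · by_cases hdy : d = y
    · by_cases hey : e = y
      · simp only [GaussCode.UpperSkew, GaussCode.LowerSkew, hdy, hey]
        omega
      · have hex : e ≠ x := q2 hdy
        have hez : e ≠ z := q3 hdy
        have he := helse e hex hey hez
        have M1 := hne6 e hex hey hez true
        have M2 := hne6 e hex hey hez false
        have B1 := nb6 e true
        have B2 := nb6 e false
        simp only [GaussCode.UpperSkew, GaussCode.LowerSkew, hdy, ht1.1, ht2.2, he]
        omega
    · by_cases hdz : d = z
      · by_cases hez : e = z
        · simp only [GaussCode.UpperSkew, GaussCode.LowerSkew, hdz, hez]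
          omega
        · have hex : e ≠ x := q6 hdz
          have hey : e ≠ y := q4 hdz
          have he := helse e hex hey hez
          have M1 := hne6 e hex hey hez true
          have M2 := hne6 e hex hey hez false
          have B1 := nb6 e true
          have B2 := nb6 e false
          simp only [GaussCode.UpperSkew, GaussCode.LowerSkew, hdz, ht2.1, ht3.2, he]
          omega
      · have hd := helse d hdx hdy hdz
        have M1 := hne6 d hdx hdy hdz true
        have M2 := hne6 d hdx hdy hdz false
        have B1 := nb6 d true
        have B2 := nb6 d false
        by_cases hex : e = x
        · simp only [GaussCode.UpperSkew, GaussCode.LowerSkew, hex, ht1.2, ht3.1, hd]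
          omega
        · by_cases hey : e = y
          · simp only [GaussCode.UpperSkew, GaussCode.LowerSkew, hey, ht1.1, ht2.2, hd]
            omega
          · by_cases hez : e = z
            · simp only [GaussCode.UpperSkew, GaussCode.LowerSkew, hez, ht2.1, ht3.2, hd]
              omega
            · have he := helse e hex hey hez
              simp only [GaussCode.UpperSkew, GaussCode.LowerSkew, hd, he]
              exact ⟨trivial, trivial⟩

set_option maxHeartbeats 2000000 in
/-- third Reidemeister move: suppose `G` contains three distinct
crossings `x, y, z` with `ε(x) = ε(z) = −ε(y)` and its word contains the three
pairwise disjoint two-entry blocks `x⁺y⁺`, `y⁻z⁻`, `z⁺x⁻` (encoded by `Imm`),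
in any relative order. Let `G′` be obtained by transposing the two entries within
each block (producing `y⁺x⁺`, `z⁻y⁻`, `x⁻z⁺`), keeping all positions outside the
blocks and all signs unchanged. Then `C⁺(G′) = C⁺(G)` and `C⁻(G′) = C⁻(G)`. -/
theorem casson_R3_invariance {C : Type} [Fintype C] [DecidableEq C]
    (G G' : GaussCode C) (x y z : C)
    (hxy : x ≠ y) (hyz : y ≠ z) (hxz : x ≠ z)
    (hsx : G.sign x = - G.sign y) (hsz : G.sign z = - G.sign y)
    (hb1 : G.Imm (G.pos x true) (G.pos y true))
    (hb2 : G.Imm (G.pos y false) (G.pos z false))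
    (hb3 : G.Imm (G.pos z true) (G.pos x false))
    (ht1 : G'.pos y true = G.pos x true ∧ G'.pos x true = G.pos y true)
    (ht2 : G'.pos z false = G.pos y false ∧ G'.pos y false = G.pos z false)
    (ht3 : G'.pos x false = G.pos z true ∧ G'.pos z true = G.pos x false)
    (helse : ∀ d : C, d ≠ x → d ≠ y → d ≠ z → ∀ b : Bool, G'.pos d b = G.pos d b)
    (hsign : ∀ d : C, G'.sign d = G.sign d) :
    G'.Cplus = G.Cplus ∧ G'.Cminus = G.Cminus := by
  have hne : ∀ (c c' : C) (b b' : Bool), (c, b) ≠ (c', b') → G.pos c b ≠ G.pos c' b' := by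
    intro c c' b b' h hh
    exact h (G.inj (show (fun p : C × Bool => G.pos p.1 p.2) (c,b)
      = (fun p : C × Bool => G.pos p.1 p.2) (c',b') from hh))
  have I1 := hb1.1
  have I2 := hb2.1
  have I3 := hb3.1
  -- all pairwise distinctness among the six special positions
  have E1 : G.pos x true ≠ G.pos y true := hne _ _ _ _ (by simp [hxy])
  have E2 : G.pos x true ≠ G.pos z true := hne _ _ _ _ (by simp [hxz])
  have E3 : G.pos y true ≠ G.pos z true := hne _ _ _ _ (by simp [hyz])
  have E4 : G.pos y false ≠ G.pos z false := hne _ _ _ _ (by simp [hyz])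
  have E5 : G.pos y false ≠ G.pos x false := hne _ _ _ _ (by simp [hxy.symm])
  have E6 : G.pos z false ≠ G.pos x false := hne _ _ _ _ (by simp [hxz.symm])
  have E7 : G.pos y false ≠ G.pos x true := hne _ _ _ _ (by simp)
  have E8 : G.pos y false ≠ G.pos y true := hne _ _ _ _ (by simp)
  have E9 : G.pos y false ≠ G.pos z true := hne _ _ _ _ (by simp)
  have E10 : G.pos z false ≠ G.pos x true := hne _ _ _ _ (by simp)
  have E11 : G.pos z false ≠ G.pos y true := hne _ _ _ _ (by simp)
  have E12 : G.pos z false ≠ G.pos z true := hne _ _ _ _ (by simp)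
  have E13 : G.pos x false ≠ G.pos x true := hne _ _ _ _ (by simp)
  have E14 : G.pos x false ≠ G.pos y true := hne _ _ _ _ (by simp)
  have E15 : G.pos x false ≠ G.pos z true := hne _ _ _ _ (by simp)
  -- block separations
  have h12 : G.pos y true < G.pos y false ∨ G.pos z false < G.pos x true := by
    have c1 := hb1.2 y false; have c2 := hb1.2 z false
    have c3 := hb2.2 x true; have c4 := hb2.2 y true
    omega
  have h13 : G.pos y true < G.pos z true ∨ G.pos x false < G.pos x true := by
    have c1 := hb1.2 z true; have c2 := hb1.2 x false
    have c3 := hb3.2 x true; have c4 := hb3.2 y true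
    omega
  have h23 : G.pos z false < G.pos z true ∨ G.pos x false < G.pos y false := by
    have c1 := hb2.2 z true; have c2 := hb2.2 x false
    have c3 := hb3.2 y false; have c4 := hb3.2 z false
    omega
  -- helpers for generic crossings
  have hne6 : ∀ (e : C), e ≠ x → e ≠ y → e ≠ z → ∀ b : Bool,
      G.pos e b ≠ G.pos x true ∧ G.pos e b ≠ G.pos y true ∧ G.pos e b ≠ G.pos y false ∧
      G.pos e b ≠ G.pos z false ∧ G.pos e b ≠ G.pos z true ∧ G.pos e b ≠ G.pos x false := by
    intro e h1 h2 h3 b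
    exact ⟨hne _ _ _ _ (by simp [h1]), hne _ _ _ _ (by simp [h2]), hne _ _ _ _ (by simp [h2]),
           hne _ _ _ _ (by simp [h3]), hne _ _ _ _ (by simp [h3]), hne _ _ _ _ (by simp [h1])⟩
  have nb6 : ∀ (e : C) (b : Bool),
      (¬(G.pos x true < G.pos e b ∧ G.pos e b < G.pos y true)) ∧
      (¬(G.pos y false < G.pos e b ∧ G.pos e b < G.pos z false)) ∧
      (¬(G.pos z true < G.pos e b ∧ G.pos e b < G.pos x false)) :=
    fun e b => ⟨hb1.2 e b, hb2.2 e b, hb3.2 e b⟩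
  have main := skew_iff G G' x y z hb1 hb2 hb3 ht1 ht2 ht3 helse
  -- sign products
  have hyy : G.sign y * G.sign y = 1 := by
    rcases G.sign_unit y with h | h <;> rw [h] <;> norm_num
  have pxy : G.sign x * G.sign y = -1 := by rw [hsx, neg_mul, hyy]
  have pyx : G.sign y * G.sign x = -1 := by rw [hsx, mul_neg, hyy]
  have pyz : G.sign y * G.sign z = -1 := by rw [hsz, mul_neg, hyy]
  have pzy : G.sign z * G.sign y = -1 := by rw [hsz, neg_mul, hyy]
  have pxz : G.sign x * G.sign z = 1 := by rw [hsx, hsz, neg_mul_neg, hyy]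
  have pzx : G.sign z * G.sign x = 1 := by rw [hsz, hsx, neg_mul_neg, hyy]
  constructor
  · unfold GaussCode.Cplus GaussCode.Pplus
    rw [Finset.sum_filter, Finset.sum_filter]
    refine sum_split6 x y z hxy hyz hxz _ _ ?_ ?_
    · intro p q1 q2 q3 q4 q5 q6
      have h := (main p q1 q2 q3 q4 q5 q6).1
      simp only [hsign, h]
    · simp only [GaussCode.UpperSkew, ht1.1, ht1.2, ht2.1, ht2.2, ht3.1, ht3.2, hsign,
        pxy, pyx, pyz, pzy, pxz, pzx]
      rcases h12 with h12 | h12 <;> rcases h13 with h13 | h13 <;> rcases h23 with h23 | h23 <;>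
        omega
  · unfold GaussCode.Cminus GaussCode.Pminus
    rw [Finset.sum_filter, Finset.sum_filter]
    refine sum_split6 x y z hxy hyz hxz _ _ ?_ ?_
    · intro p q1 q2 q3 q4 q5 q6
      have h := (main p q1 q2 q3 q4 q5 q6).2
      simp only [hsign, h]
    · simp only [GaussCode.LowerSkew, ht1.1, ht1.2, ht2.1, ht2.2, ht3.1, ht3.2, hsign,
        pxy, pyx, pyz, pzy, pxz, pzx]
      rcases h12 with h12 | h12 <;> rcases h13 with h13 | h13 <;> rcases h23 with h23 | h23 <;>
        omega
end

section
/- Let G be a ℤ-enriched signed Gauss code containing distinct crossings x and y with ε(y) = −ε(x) and w(y) = w(x), such that the occurrence y⁺ immediately follows x⁺ and the occurrence y⁻ immediately follows x⁻ in the word. Let G′ be obtained from G by deleting all four occurrences of x and y. Then CH⁺(G′) = CH⁺(G) and CH⁻(G′) = CH⁻(G). (This is invariance of the homological extension CH± under the second Reidemeister move, in the annulus case H₁ ≅ ℤ.) -/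
/-- A ℤ-enriched signed Gauss code: a signed Gauss code together with a function
`w` assigning to each crossing `c` the class in `H₁(annulus) ≅ ℤ` of the loop
obtained by smoothing `c`. -/
structure EGaussCode (C : Type) [Fintype C] [DecidableEq C] extends GaussCode C where
  w : C → ℤ

namespace EGaussCode

variable {C : Type} [Fintype C] [DecidableEq C]

/-- The subgroup `H(x, y) ≤ ℤ` generated by `w x` and `w y`. -/
def H (G : EGaussCode C) (x y : C) : AddSubgroup ℤ :=
  AddSubgroup.closure {G.w x, G.w y}

/-- `CH⁺`: the element of the free ℤ-module on the set of subgroups of `ℤ`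
given by the sum, over all upper skew pairs `(x, y)`, of `ε(x)·ε(y)` times the
basis element indexed by `H(x, y)`. -/
noncomputable def CHplus (G : EGaussCode C) : AddSubgroup ℤ →₀ ℤ :=
  ∑ p ∈ G.toGaussCode.Pplus,
    Finsupp.single (G.H p.1 p.2) (G.sign p.1 * G.sign p.2)

/-- `CH⁻`: the analogous sum over all lower skew pairs. -/
noncomputable def CHminus (G : EGaussCode C) : AddSubgroup ℤ →₀ ℤ :=
  ∑ p ∈ G.toGaussCode.Pminus,
    Finsupp.single (G.H p.1 p.2) (G.sign p.1 * G.sign p.2)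

/-- The norm `‖q‖`: the sum of the absolute values of the coordinates of `q`. -/
noncomputable def norm (q : AddSubgroup ℤ →₀ ℤ) : ℕ :=
  q.sum fun _ v => v.natAbs

end EGaussCode

namespace EGaussCode

variable {C : Type} [Fintype C] [DecidableEq C]

/-- Deleting all four occurrences of the crossings `x` and `y` from a ℤ-enriched
signed Gauss code. -/
def erase2 (G : EGaussCode C) (x y : C) : EGaussCode {d : C // d ≠ x ∧ d ≠ y} where
  toGaussCode := G.toGaussCode.erase2 x y
  w d := G.w d.1

end EGaussCode

section
variable {C : Type} [Fintype C] [DecidableEq C]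

lemma sum_cancel_helper (G : EGaussCode C) (x y : C) (hxy : x ≠ y)
    (hsign : G.sign y = - G.sign x) (hw : G.w y = G.w x)
    (S : Finset (C × C))
    (hSx : ∀ d, d ≠ x → d ≠ y → ((x, d) ∈ S ↔ (y, d) ∈ S))
    (hSy : ∀ d, d ≠ x → d ≠ y → ((d, x) ∈ S ↔ (d, y) ∈ S))
    (hxx : (x, x) ∉ S) (hyy : (y, y) ∉ S) (hxy2 : (x, y) ∉ S) (hyx : (y, x) ∉ S)
    (S' : Finset ({d : C // d ≠ x ∧ d ≠ y} × {d : C // d ≠ x ∧ d ≠ y}))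
    (hS' : ∀ p, p ∈ S' ↔ (p.1.1, p.2.1) ∈ S) :
    ∑ p ∈ S', Finsupp.single ((G.erase2 x y).H p.1 p.2)
        ((G.erase2 x y).sign p.1 * (G.erase2 x y).sign p.2)
    = ∑ p ∈ S, Finsupp.single (G.H p.1 p.2) (G.sign p.1 * G.sign p.2) := by
  classical
  set f : C × C → (AddSubgroup ℤ →₀ ℤ) :=
    fun p => Finsupp.single (G.H p.1 p.2) (G.sign p.1 * G.sign p.2) with hf
  have hHx : ∀ d, G.H y d = G.H x d := by intro d; unfold EGaussCode.H; rw [hw]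
  have hHy : ∀ d, G.H d y = G.H d x := by intro d; unfold EGaussCode.H; rw [hw]
  set pred : C × C → Prop := fun p => p.1 ≠ x ∧ p.1 ≠ y ∧ p.2 ≠ x ∧ p.2 ≠ y with hpred
  have hsplit := Finset.sum_filter_add_sum_filter_not S pred f
  -- case analysis on B
  have hBcase : ∀ p ∈ S.filter (fun p => ¬ pred p),
      (x = p.1 ∧ p.2 ≠ x ∧ p.2 ≠ y) ∨ (y = p.1 ∧ p.2 ≠ x ∧ p.2 ≠ y) ∨
      (x = p.2 ∧ p.1 ≠ x ∧ p.1 ≠ y) ∨ (y = p.2 ∧ p.1 ≠ x ∧ p.1 ≠ y) := by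
    rintro ⟨a, b⟩ hp
    rw [Finset.mem_filter] at hp
    obtain ⟨hpS, hnp⟩ := hp
    simp only [hpred, not_and_or, not_not] at hnp
    by_cases ha1 : a = x <;> by_cases ha2 : a = y <;>
      by_cases hb1 : b = x <;> by_cases hb2 : b = y <;>
      subst_vars <;> simp_all
  set sw : C → C := fun d => if d = x then y else if d = y then x else d with hsw
  have swx : sw x = y := by simp [hsw]
  have swy : sw y = x := by simp [hsw, hxy.symm]
  have swo : ∀ d, d ≠ x → d ≠ y → sw d = d := by intro d h1 h2; simp [hsw, h1, h2]
  have hB : ∑ p ∈ S.filter (fun p => ¬ pred p), f p = 0 := by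
    apply Finset.sum_involution (fun p _ => (sw p.1, sw p.2))
    · intro p hp
      rcases hBcase p hp with ⟨h1, h2, h3⟩ | ⟨h1, h2, h3⟩ | ⟨h1, h2, h3⟩ | ⟨h1, h2, h3⟩ <;>
        obtain ⟨a, b⟩ := p <;> dsimp only at h1 h2 h3 ⊢ <;> subst h1
      · rw [swx, swo b h2 h3]
        show Finsupp.single (G.H x b) _ + Finsupp.single (G.H y b) _ = 0
        rw [hHx, hsign, show -G.sign x * G.sign b = -(G.sign x * G.sign b) by ring,
          Finsupp.single_neg, add_neg_cancel]
      · rw [swy, swo b h2 h3]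
        show Finsupp.single (G.H y b) _ + Finsupp.single (G.H x b) _ = 0
        rw [hHx, hsign, show -G.sign x * G.sign b = -(G.sign x * G.sign b) by ring,
          Finsupp.single_neg, neg_add_cancel]
      · rw [swx, swo a h2 h3]
        show Finsupp.single (G.H a x) _ + Finsupp.single (G.H a y) _ = 0
        rw [hHy, hsign, show G.sign a * -G.sign x = -(G.sign a * G.sign x) by ring,
          Finsupp.single_neg, add_neg_cancel]
      · rw [swy, swo a h2 h3]
        show Finsupp.single (G.H a y) _ + Finsupp.single (G.H a x) _ = 0
        rw [hHy, hsign, show G.sign a * -G.sign x = -(G.sign a * G.sign x) by ring,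
          Finsupp.single_neg, neg_add_cancel]
    · intro p hp _
      rcases hBcase p hp with ⟨h1, h2, h3⟩ | ⟨h1, h2, h3⟩ | ⟨h1, h2, h3⟩ | ⟨h1, h2, h3⟩ <;>
        obtain ⟨a, b⟩ := p <;> dsimp only at h1 h2 h3 ⊢ <;> subst h1 <;>
        simp [swx, swy, swo _ h2 h3, hxy, hxy.symm, Prod.ext_iff]
    · intro p hp
      rcases hBcase p hp with ⟨h1, h2, h3⟩ | ⟨h1, h2, h3⟩ | ⟨h1, h2, h3⟩ | ⟨h1, h2, h3⟩ <;>
        obtain ⟨a, b⟩ := p <;> dsimp only at h1 h2 h3 ⊢ <;> subst h1 <;>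
        rw [Finset.mem_filter] at hp ⊢
      · rw [swx, swo b h2 h3]
        exact ⟨(hSx b h2 h3).1 hp.1, by simp [hpred]⟩
      · rw [swy, swo b h2 h3]
        exact ⟨(hSx b h2 h3).2 hp.1, by simp [hpred]⟩
      · rw [swx, swo a h2 h3]
        exact ⟨(hSy a h2 h3).1 hp.1, by simp [hpred]⟩
      · rw [swy, swo a h2 h3]
        exact ⟨(hSy a h2 h3).2 hp.1, by simp [hpred]⟩
    · intro p hp
      rcases hBcase p hp with ⟨h1, h2, h3⟩ | ⟨h1, h2, h3⟩ | ⟨h1, h2, h3⟩ | ⟨h1, h2, h3⟩ <;>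
        obtain ⟨a, b⟩ := p <;> dsimp only at h1 h2 h3 ⊢ <;> subst h1 <;>
        simp [swx, swy, swo _ h2 h3]
  have hA : ∑ p ∈ S', Finsupp.single ((G.erase2 x y).H p.1 p.2)
        ((G.erase2 x y).sign p.1 * (G.erase2 x y).sign p.2)
      = ∑ p ∈ S.filter pred, f p := by
    apply Finset.sum_bij (fun q _ => ((q.1.1 : C), (q.2.1 : C)))
    · intro q hq
      rw [Finset.mem_filter]
      exact ⟨(hS' q).1 hq, q.1.2.1, q.1.2.2, q.2.2.1, q.2.2.2⟩
    · rintro ⟨⟨a, ha⟩, ⟨b, hb⟩⟩ h1 ⟨⟨c, hc⟩, ⟨d, hd⟩⟩ h2 h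
      simp_all [Prod.ext_iff, Subtype.ext_iff]
    · rintro ⟨a, b⟩ hp
      rw [Finset.mem_filter] at hp
      obtain ⟨hpS, h1, h2, h3, h4⟩ := hp
      exact ⟨(⟨a, h1, h2⟩, ⟨b, h3, h4⟩), (hS' _).2 hpS, rfl⟩
    · intro q hq; rfl
  rw [hA, ← hsplit, hB, add_zero]

end

/-- second Reidemeister move for the homological extension: if
`x ≠ y` are crossings of a ℤ-enriched signed Gauss code with `ε(y) = −ε(x)` and
`w(y) = w(x)`, such that `y⁺` immediately follows `x⁺` and `y⁻` immediately
follows `x⁻` in the word, then deleting all four occurrences of `x` and `y`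
leaves `CH⁺` and `CH⁻` unchanged. -/
theorem cassonH_R2_invariance {C : Type} [Fintype C] [DecidableEq C]
    (G : EGaussCode C) (x y : C) (hxy : x ≠ y)
    (hsign : G.sign y = - G.sign x) (hw : G.w y = G.w x)
    (himm_over : G.toGaussCode.Imm (G.pos x true) (G.pos y true))
    (himm_under : G.toGaussCode.Imm (G.pos x false) (G.pos y false)) :
    (G.erase2 x y).CHplus = G.CHplus ∧ (G.erase2 x y).CHminus = G.CHminus := by
  classical
  have posne : ∀ (d : C) (b : Bool) (e : C) (b' : Bool), (d, b) ≠ (e, b') →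
      G.pos d b ≠ G.pos e b' := fun d b e b' h hp => h (G.toGaussCode.inj hp)
  obtain ⟨ho1, ho2⟩ := himm_over
  obtain ⟨hu1, hu2⟩ := himm_under
  have nxy1 : G.pos x true ≠ G.pos y true := posne _ _ _ _ (by simp [hxy])
  have nxy2 : G.pos x false ≠ G.pos y false := posne _ _ _ _ (by simp [hxy])
  have nxy3 : G.pos x true ≠ G.pos y false := posne _ _ _ _ (by simp)
  have nxy4 : G.pos x false ≠ G.pos y true := posne _ _ _ _ (by simp)
  have nxx : G.pos x true ≠ G.pos x false := posne _ _ _ _ (by simp)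
  have nyy : G.pos y true ≠ G.pos y false := posne _ _ _ _ (by simp)
  have memP : ∀ a b : C, ((a, b) ∈ G.toGaussCode.Pplus) ↔ G.toGaussCode.UpperSkew a b := by
    intro a b; simp [GaussCode.Pplus]
  have memM : ∀ a b : C, ((a, b) ∈ G.toGaussCode.Pminus) ↔ G.toGaussCode.LowerSkew a b := by
    intro a b; simp [GaussCode.Pminus]
  have nefacts : ∀ d : C, d ≠ x → d ≠ y →
      (G.pos d false ≠ G.pos x true ∧ G.pos d false ≠ G.pos y true ∧
       G.pos d false ≠ G.pos x false ∧ G.pos d false ≠ G.pos y false ∧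
       G.pos d true ≠ G.pos x true ∧ G.pos d true ≠ G.pos y true ∧
       G.pos d true ≠ G.pos x false ∧ G.pos d true ≠ G.pos y false) := by
    intro d hd1 hd2
    exact ⟨posne _ _ _ _ (by simp), posne _ _ _ _ (by simp),
      posne _ _ _ _ (by simp [hd1]), posne _ _ _ _ (by simp [hd2]),
      posne _ _ _ _ (by simp [hd1]), posne _ _ _ _ (by simp [hd2]),
      posne _ _ _ _ (by simp), posne _ _ _ _ (by simp)⟩
  constructor
  · unfold EGaussCode.CHplus
    apply sum_cancel_helper G x y hxy hsign hw
    · intro d hd1 hd2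
      obtain ⟨n1, n2, n3, n4, n5, n6, n7, n8⟩ := nefacts d hd1 hd2
      have k1 := ho2 d true; have k2 := ho2 d false
      have k3 := hu2 d true; have k4 := hu2 d false
      rw [memP, memP]; unfold GaussCode.UpperSkew; omega
    · intro d hd1 hd2
      obtain ⟨n1, n2, n3, n4, n5, n6, n7, n8⟩ := nefacts d hd1 hd2
      have k1 := ho2 d true; have k2 := ho2 d false
      have k3 := hu2 d true; have k4 := hu2 d false
      rw [memP, memP]; unfold GaussCode.UpperSkew; omega
    · rw [memP]; unfold GaussCode.UpperSkew; omega
    · rw [memP]; unfold GaussCode.UpperSkew; omega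
    · rw [memP]; unfold GaussCode.UpperSkew; omega
    · rw [memP]; unfold GaussCode.UpperSkew; omega
    · intro p
      rw [memP]; unfold GaussCode.Pplus; rw [Finset.mem_filter]
      exact ⟨fun h => h.2, fun h => ⟨Finset.mem_univ _, h⟩⟩
  · unfold EGaussCode.CHminus
    apply sum_cancel_helper G x y hxy hsign hw
    · intro d hd1 hd2
      obtain ⟨n1, n2, n3, n4, n5, n6, n7, n8⟩ := nefacts d hd1 hd2
      have k1 := ho2 d true; have k2 := ho2 d false
      have k3 := hu2 d true; have k4 := hu2 d false
      rw [memM, memM]; unfold GaussCode.LowerSkew; omega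
    · intro d hd1 hd2
      obtain ⟨n1, n2, n3, n4, n5, n6, n7, n8⟩ := nefacts d hd1 hd2
      have k1 := ho2 d true; have k2 := ho2 d false
      have k3 := hu2 d true; have k4 := hu2 d false
      rw [memM, memM]; unfold GaussCode.LowerSkew; omega
    · rw [memM]; unfold GaussCode.LowerSkew; omega
    · rw [memM]; unfold GaussCode.LowerSkew; omega
    · rw [memM]; unfold GaussCode.LowerSkew; omega
    · rw [memM]; unfold GaussCode.LowerSkew; omega
    · intro p
      rw [memM]; unfold GaussCode.Pminus; rw [Finset.mem_filter]
      exact ⟨fun h => h.2, fun h => ⟨Finset.mem_univ _, h⟩⟩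
end

section
/- Let G be a ℤ-enriched signed Gauss code containing three distinct crossings x, y, z with ε(x) = ε(z) = −ε(y) and w(x) = w(y) + w(z), whose word contains the three two-entry blocks x⁺y⁺, y⁻z⁻ and z⁺x⁻ (each block occupying two consecutive positions, the three blocks pairwise disjoint and appearing in any relative order in the word). Let G′ be obtained from G by transposing the two entries within each of these three blocks (producing the blocks y⁺x⁺, z⁻y⁻ and x⁻z⁺), keeping all crossing signs and all values of w unchanged. Then CH⁺(G′) = CH⁺(G) and CH⁻(G′) = CH⁻(G). (This is invariance of the homological extension CH± under the third Reidemeister move, in the annulus case H₁ ≅ ℤ.) -/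
set_option maxHeartbeats 4000000 in
/-- third Reidemeister move for the homological extension: suppose
the ℤ-enriched signed Gauss code `G` contains three distinct crossings `x, y, z`
with `ε(x) = ε(z) = −ε(y)` and `w(x) = w(y) + w(z)`, and its word contains the
three pairwise disjoint two-entry blocks `x⁺y⁺`, `y⁻z⁻`, `z⁺x⁻` (encoded by
`Imm`), in any relative order. Let `G′` be obtained by transposing the two
entries within each block (producing `y⁺x⁺`, `z⁻y⁻`, `x⁻z⁺`), keeping all
positions outside the blocks, all signs, and all values of `w` unchanged. Then
`CH⁺(G′) = CH⁺(G)` and `CH⁻(G′) = CH⁻(G)`. -/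
theorem cassonH_R3_invariance {C : Type} [Fintype C] [DecidableEq C]
    (G G' : EGaussCode C) (x y z : C)
    (hxy : x ≠ y) (hyz : y ≠ z) (hxz : x ≠ z)
    (hsx : G.sign x = - G.sign y) (hsz : G.sign z = - G.sign y)
    (hwx : G.w x = G.w y + G.w z)
    (hb1 : G.toGaussCode.Imm (G.pos x true) (G.pos y true))
    (hb2 : G.toGaussCode.Imm (G.pos y false) (G.pos z false))
    (hb3 : G.toGaussCode.Imm (G.pos z true) (G.pos x false))
    (ht1 : G'.pos y true = G.pos x true ∧ G'.pos x true = G.pos y true)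
    (ht2 : G'.pos z false = G.pos y false ∧ G'.pos y false = G.pos z false)
    (ht3 : G'.pos x false = G.pos z true ∧ G'.pos z true = G.pos x false)
    (helse : ∀ d : C, d ≠ x → d ≠ y → d ≠ z → ∀ b : Bool, G'.pos d b = G.pos d b)
    (hsign : ∀ d : C, G'.sign d = G.sign d)
    (hw : ∀ d : C, G'.w d = G.w d) :
    G'.CHplus = G.CHplus ∧ G'.CHminus = G.CHminus := by
  classical
  obtain ⟨ht1a, ht1b⟩ := ht1
  obtain ⟨ht2a, ht2b⟩ := ht2
  obtain ⟨ht3a, ht3b⟩ := ht3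
  obtain ⟨hA, hAin⟩ := hb1
  obtain ⟨hB, hBin⟩ := hb2
  obtain ⟨hC, hCin⟩ := hb3
  have hne : ∀ (c : C) (b : Bool) (c' : C) (b' : Bool),
      (c, b) ≠ ((c', b') : C × Bool) → G.pos c b ≠ G.pos c' b' := by
    intro c b c' b' h h'
    exact h (G.inj h')
  -- block separations
  have hAB : G.pos y true < G.pos y false ∨ G.pos z false < G.pos x true := by
    have h1 := hAin y false
    have h2 := hAin z false
    have h3 := hBin x true
    have h4 := hBin y true
    have d1 : G.pos y false ≠ G.pos x true := hne _ _ _ _ (by simp)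
    have d2 : G.pos y false ≠ G.pos y true := hne _ _ _ _ (by simp)
    have d3 : G.pos z false ≠ G.pos x true := hne _ _ _ _ (by simp)
    have d4 : G.pos z false ≠ G.pos y true := hne _ _ _ _ (by simp)
    omega
  have hAC : G.pos y true < G.pos z true ∨ G.pos x false < G.pos x true := by
    have h1 := hAin z true
    have h2 := hAin x false
    have h3 := hCin x true
    have h4 := hCin y true
    have d1 : G.pos z true ≠ G.pos x true := hne _ _ _ _ (by simp [Prod.mk.injEq, Ne.symm hxz])
    have d2 : G.pos z true ≠ G.pos y true := hne _ _ _ _ (by simp [Prod.mk.injEq, Ne.symm hyz])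
    have d3 : G.pos x false ≠ G.pos x true := hne _ _ _ _ (by simp)
    have d4 : G.pos x false ≠ G.pos y true := hne _ _ _ _ (by simp)
    omega
  have hBC : G.pos z false < G.pos z true ∨ G.pos x false < G.pos y false := by
    have h1 := hBin z true
    have h2 := hBin x false
    have h3 := hCin y false
    have h4 := hCin z false
    have d1 : G.pos z true ≠ G.pos y false := hne _ _ _ _ (by simp)
    have d2 : G.pos z true ≠ G.pos z false := hne _ _ _ _ (by simp)
    have d3 : G.pos x false ≠ G.pos y false := hne _ _ _ _ (by simp [Prod.mk.injEq, hxy])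
    have d4 : G.pos x false ≠ G.pos z false := hne _ _ _ _ (by simp [Prod.mk.injEq, hxz])
    omega
  -- comparison transfer for occurrences of crossings outside {x, y, z}
  have transfer : ∀ (u : C) (bu : Bool) (d : C) (bd : Bool), d ≠ x → d ≠ y → d ≠ z →
      ((G'.pos u bu < G'.pos d bd ↔ G.pos u bu < G.pos d bd) ∧
       (G'.pos d bd < G'.pos u bu ↔ G.pos d bd < G.pos u bu)) := by
    intro u bu d bd hdx hdy hdz
    rw [helse d hdx hdy hdz bd]
    have h1 := hAin d bd
    have h2 := hBin d bd
    have h3 := hCin d bd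
    have n1 : G.pos d bd ≠ G.pos x true := hne _ _ _ _ (by simp [Prod.mk.injEq, hdx])
    have n2 : G.pos d bd ≠ G.pos y true := hne _ _ _ _ (by simp [Prod.mk.injEq, hdy])
    have n3 : G.pos d bd ≠ G.pos y false := hne _ _ _ _ (by simp [Prod.mk.injEq, hdy])
    have n4 : G.pos d bd ≠ G.pos z false := hne _ _ _ _ (by simp [Prod.mk.injEq, hdz])
    have n5 : G.pos d bd ≠ G.pos z true := hne _ _ _ _ (by simp [Prod.mk.injEq, hdz])
    have n6 : G.pos d bd ≠ G.pos x false := hne _ _ _ _ (by simp [Prod.mk.injEq, hdx])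
    rcases eq_or_ne u x with rfl | hux
    · cases bu
      · rw [ht3a]; omega
      · rw [ht1b]; omega
    rcases eq_or_ne u y with rfl | huy
    · cases bu
      · rw [ht2b]; omega
      · rw [ht1a]; omega
    rcases eq_or_ne u z with rfl | huz
    · cases bu
      · rw [ht2a]; omega
      · rw [ht3b]; omega
    · rw [helse u hux huy huz bu]
      exact ⟨Iff.rfl, Iff.rfl⟩
  set T : Finset (C × C) := {(x,y),(y,x),(x,z),(z,x),(y,z),(z,y)} with hT
  -- equivalence of skew conditions outside T
  have skewIff : ∀ u v : C, (u, v) ∉ T →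
      ((G'.toGaussCode.UpperSkew u v ↔ G.toGaussCode.UpperSkew u v) ∧
       (G'.toGaussCode.LowerSkew u v ↔ G.toGaussCode.LowerSkew u v)) := by
    intro u v hp
    by_cases huv : u = v
    · subst huv
      exact ⟨iff_of_false (fun h => lt_irrefl _ h.2.1) (fun h => lt_irrefl _ h.2.1),
        iff_of_false (fun h => lt_irrefl _ h.2.1) (fun h => lt_irrefl _ h.2.1)⟩
    by_cases hv : v ≠ x ∧ v ≠ y ∧ v ≠ z
    · obtain ⟨hv1, hv2, hv3⟩ := hv
      unfold GaussCode.UpperSkew GaussCode.LowerSkew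
      exact ⟨and_congr (transfer u true v false hv1 hv2 hv3).1
          (and_congr (transfer u false v false hv1 hv2 hv3).2
            (transfer u false v true hv1 hv2 hv3).1),
        and_congr (transfer u false v true hv1 hv2 hv3).1
          (and_congr (transfer u true v true hv1 hv2 hv3).2
            (transfer u true v false hv1 hv2 hv3).1)⟩
    by_cases hu : u ≠ x ∧ u ≠ y ∧ u ≠ z
    · obtain ⟨hu1, hu2, hu3⟩ := hu
      unfold GaussCode.UpperSkew GaussCode.LowerSkew
      exact ⟨and_congr (transfer v false u true hu1 hu2 hu3).2
          (and_congr (transfer v false u false hu1 hu2 hu3).1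
            (transfer v true u false hu1 hu2 hu3).2),
        and_congr (transfer v true u false hu1 hu2 hu3).2
          (and_congr (transfer v true u true hu1 hu2 hu3).1
            (transfer v false u true hu1 hu2 hu3).2)⟩
    · exfalso
      have hv' : v = x ∨ v = y ∨ v = z := by
        by_contra h; push_neg at h; exact hv ⟨h.1, h.2.1, h.2.2⟩
      have hu' : u = x ∨ u = y ∨ u = z := by
        by_contra h; push_neg at h; exact hu ⟨h.1, h.2.1, h.2.2⟩
      apply hp
      rw [hT]
      simp only [Finset.mem_insert, Finset.mem_singleton, Prod.mk.injEq]
      rcases hu' with rfl|rfl|rfl <;> rcases hv' with rfl|rfl|rfl <;>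
        first
          | exact absurd rfl huv
          | simp
  -- equality of the H-subgroups
  have hH' : ∀ u v : C, G'.H u v = G.H u v := by
    intro u v
    simp only [EGaussCode.H, hw]
  have pairres : ∀ a b : ℤ, AddSubgroup.closure {a + b, a} = AddSubgroup.closure {a, b} := by
    intro a b
    apply le_antisymm
    · rw [AddSubgroup.closure_le]
      intro t ht
      simp only [Set.mem_insert_iff, Set.mem_singleton_iff] at ht
      rcases ht with h | h
      · rw [h]
        exact add_mem (AddSubgroup.subset_closure (by simp)) (AddSubgroup.subset_closure (by simp))
      · rw [h]; exact AddSubgroup.subset_closure (by simp)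
    · rw [AddSubgroup.closure_le]
      intro t ht
      simp only [Set.mem_insert_iff, Set.mem_singleton_iff] at ht
      rcases ht with h | h
      · rw [h]; exact AddSubgroup.subset_closure (by simp)
      · have h1 : a + b - a ∈ AddSubgroup.closure ({a + b, a} : Set ℤ) :=
          sub_mem (AddSubgroup.subset_closure (by simp)) (AddSubgroup.subset_closure (by simp))
        rw [h]
        simpa using h1
  have pc : ∀ a b : ℤ, AddSubgroup.closure ({a, b} : Set ℤ) = AddSubgroup.closure {b, a} := by
    intro a b; rw [Set.pair_comm]
  have hHxy : G.H x y = G.H y z := by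
    simp only [EGaussCode.H]
    rw [hwx, pairres]
  have hHyx : G.H y x = G.H y z := by
    simp only [EGaussCode.H]
    rw [pc (G.w y) (G.w x), hwx, pairres]
  have hHxz : G.H x z = G.H y z := by
    simp only [EGaussCode.H]
    rw [hwx, add_comm (G.w y) (G.w z), pairres, pc (G.w z) (G.w y)]
  have hHzx : G.H z x = G.H y z := by
    simp only [EGaussCode.H]
    rw [pc (G.w z) (G.w x), hwx, add_comm (G.w y) (G.w z), pairres, pc (G.w z) (G.w y)]
  have hHzy : G.H z y = G.H y z := by
    simp only [EGaussCode.H]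
    rw [pc (G.w z) (G.w y)]
  -- sign products
  have habs : ∀ c : C, G.sign c * G.sign c = 1 := by
    intro c; rcases G.sign_unit c with h | h <;> rw [h] <;> ring
  have sxy : G.sign x * G.sign y = -1 := by rw [hsx, neg_mul, habs y]
  have syx : G.sign y * G.sign x = -1 := by rw [hsx, mul_neg, habs y]
  have sxz : G.sign x * G.sign z = 1 := by rw [hsx, hsz, neg_mul_neg, habs y]
  have szx : G.sign z * G.sign x = 1 := by rw [hsx, hsz, neg_mul_neg, habs y]
  have syz : G.sign y * G.sign z = -1 := by rw [hsz, mul_neg, habs y]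
  have szy : G.sign z * G.sign y = -1 := by rw [hsz, neg_mul, habs y]
  -- generic splitting of the sum
  have split : ∀ (f g : C × C → (AddSubgroup ℤ →₀ ℤ)),
      (∀ p : C × C, p ∉ T → f p = g p) →
      ((∑ p ∈ T, f p) = ∑ p ∈ T, g p) →
      ((∑ p : C × C, f p) = ∑ p : C × C, g p) := by
    intro f g hout hin
    have h1 : ∑ p ∈ T, (f p - g p) = ∑ p : C × C, (f p - g p) :=
      Finset.sum_subset (Finset.subset_univ T) (fun p _ hp => by rw [hout p hp, sub_self])
    have h2 : ∑ p : C × C, (f p - g p) = 0 := by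
      rw [← h1, Finset.sum_sub_distrib, hin, sub_self]
    rw [Finset.sum_sub_distrib] at h2
    exact sub_eq_zero.mp h2
  have hTsum : ∀ (f : C × C → (AddSubgroup ℤ →₀ ℤ)),
      (∑ p ∈ T, f p) =
        f (x,y) + (f (y,x) + (f (x,z) + (f (z,x) + (f (y,z) + f (z,y))))) := by
    intro f
    rw [hT]
    rw [show ({(x,y),(y,x),(x,z),(z,x),(y,z),(z,y)} : Finset (C×C)) =
        insert (x,y) (insert (y,x) (insert (x,z) (insert (z,x)
          (insert (y,z) ({(z,y)} : Finset (C×C)))))) from rfl]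
    rw [Finset.sum_insert (by
      simp [Prod.mk.injEq, hxy, hyz, hxz, Ne.symm hxy, Ne.symm hyz, Ne.symm hxz])]
    rw [Finset.sum_insert (by
      simp [Prod.mk.injEq, hxy, hyz, hxz, Ne.symm hxy, Ne.symm hyz, Ne.symm hxz])]
    rw [Finset.sum_insert (by
      simp [Prod.mk.injEq, hxy, hyz, hxz, Ne.symm hxy, Ne.symm hyz, Ne.symm hxz])]
    rw [Finset.sum_insert (by
      simp [Prod.mk.injEq, hxy, hyz, hxz, Ne.symm hxy, Ne.symm hyz, Ne.symm hxz])]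
    rw [Finset.sum_insert (by
      simp [Prod.mk.injEq, hxy, hyz, hxz, Ne.symm hxy, Ne.symm hyz, Ne.symm hxz])]
    rw [Finset.sum_singleton]
  have iteS : ∀ (P : Prop) [Decidable P] (k : AddSubgroup ℤ) (c : ℤ),
      (if P then (Finsupp.single k c : AddSubgroup ℤ →₀ ℤ) else 0) =
        Finsupp.single k (if P then c else 0) := by
    intro P _ k c
    split <;> simp
  have sumU : ∀ (GG : EGaussCode C), GG.CHplus =
      ∑ p : C × C, (if GG.toGaussCode.UpperSkew p.1 p.2
        then Finsupp.single (GG.H p.1 p.2) (GG.sign p.1 * GG.sign p.2) else 0) := by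
    intro GG
    simp only [EGaussCode.CHplus, GaussCode.Pplus, Finset.sum_filter]
  have sumL : ∀ (GG : EGaussCode C), GG.CHminus =
      ∑ p : C × C, (if GG.toGaussCode.LowerSkew p.1 p.2
        then Finsupp.single (GG.H p.1 p.2) (GG.sign p.1 * GG.sign p.2) else 0) := by
    intro GG
    simp only [EGaussCode.CHminus, GaussCode.Pminus, Finset.sum_filter]
  constructor
  · rw [sumU G', sumU G]
    apply split
    · intro p hp
      by_cases hcase : G.toGaussCode.UpperSkew p.1 p.2
      · rw [if_pos hcase, if_pos (((skewIff p.1 p.2 hp).1).2 hcase),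
          hH' p.1 p.2, hsign p.1, hsign p.2]
      · rw [if_neg hcase, if_neg (fun h => hcase (((skewIff p.1 p.2 hp).1).1 h))]
    · rw [hTsum, hTsum]
      dsimp only
      simp only [hH', hsign, hHxy, hHyx, hHxz, hHzx, hHzy, sxy, syx, sxz, szx, syz, szy]
      simp only [iteS, ← Finsupp.single_add]
      refine congrArg _ ?_
      have hU : ∀ (GG : GaussCode C) (a b : C), GG.UpperSkew a b ↔ (GG.pos a true < GG.pos b false ∧ GG.pos b false < GG.pos a false ∧ GG.pos a false < GG.pos b true) := fun _ _ _ => Iff.rfl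
      simp only [hU]
      simp only [ht1a, ht1b, ht2a, ht2b, ht3a, ht3b]
      rcases hAB with hab | hab <;> rcases hAC with hac | hac <;> rcases hBC with hbc | hbc
      · rw [if_neg (show ¬(G.pos y true < G.pos z false ∧ G.pos z false < G.pos z true ∧ G.pos z true < G.pos x true) by omega),
            if_neg (show ¬(G.pos x true < G.pos z true ∧ G.pos z true < G.pos z false ∧ G.pos z false < G.pos y true) by omega),
            if_pos (show (G.pos y true < G.pos y false ∧ G.pos y false < G.pos z true ∧ G.pos z true < G.pos x false) by omega),
            if_neg (show ¬(G.pos x false < G.pos z true ∧ G.pos z true < G.pos y false ∧ G.pos y false < G.pos y true) by omega),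
            if_pos (show (G.pos x true < G.pos y false ∧ G.pos y false < G.pos z false ∧ G.pos z false < G.pos x false) by omega),
            if_neg (show ¬(G.pos x false < G.pos z false ∧ G.pos z false < G.pos y false ∧ G.pos y false < G.pos x true) by omega),
            if_neg (show ¬(G.pos x true < G.pos y false ∧ G.pos y false < G.pos x false ∧ G.pos x false < G.pos y true) by omega),
            if_neg (show ¬(G.pos y true < G.pos x false ∧ G.pos x false < G.pos y false ∧ G.pos y false < G.pos x true) by omega),
            if_neg (show ¬(G.pos x true < G.pos z false ∧ G.pos z false < G.pos x false ∧ G.pos x false < G.pos z true) by omega),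
            if_neg (show ¬(G.pos z true < G.pos x false ∧ G.pos x false < G.pos z false ∧ G.pos z false < G.pos x true) by omega),
            if_neg (show ¬(G.pos y true < G.pos z false ∧ G.pos z false < G.pos y false ∧ G.pos y false < G.pos z true) by omega),
            if_neg (show ¬(G.pos z true < G.pos y false ∧ G.pos y false < G.pos z false ∧ G.pos z false < G.pos y true) by omega)]
        all_goals norm_num
      · rw [if_neg (show ¬(G.pos y true < G.pos z false ∧ G.pos z false < G.pos z true ∧ G.pos z true < G.pos x true) by omega),
            if_neg (show ¬(G.pos x true < G.pos z true ∧ G.pos z true < G.pos z false ∧ G.pos z false < G.pos y true) by omega),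
            if_neg (show ¬(G.pos y true < G.pos y false ∧ G.pos y false < G.pos z true ∧ G.pos z true < G.pos x false) by omega),
            if_neg (show ¬(G.pos x false < G.pos z true ∧ G.pos z true < G.pos y false ∧ G.pos y false < G.pos y true) by omega),
            if_neg (show ¬(G.pos x true < G.pos y false ∧ G.pos y false < G.pos z false ∧ G.pos z false < G.pos x false) by omega),
            if_neg (show ¬(G.pos x false < G.pos z false ∧ G.pos z false < G.pos y false ∧ G.pos y false < G.pos x true) by omega),
            if_neg (show ¬(G.pos x true < G.pos y false ∧ G.pos y false < G.pos x false ∧ G.pos x false < G.pos y true) by omega),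
            if_neg (show ¬(G.pos y true < G.pos x false ∧ G.pos x false < G.pos y false ∧ G.pos y false < G.pos x true) by omega),
            if_neg (show ¬(G.pos x true < G.pos z false ∧ G.pos z false < G.pos x false ∧ G.pos x false < G.pos z true) by omega),
            if_neg (show ¬(G.pos z true < G.pos x false ∧ G.pos x false < G.pos z false ∧ G.pos z false < G.pos x true) by omega),
            if_neg (show ¬(G.pos y true < G.pos z false ∧ G.pos z false < G.pos y false ∧ G.pos y false < G.pos z true) by omega),
            if_neg (show ¬(G.pos z true < G.pos y false ∧ G.pos y false < G.pos z false ∧ G.pos z false < G.pos y true) by omega)]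
        all_goals norm_num
      · exfalso; omega
      · rw [if_neg (show ¬(G.pos y true < G.pos z false ∧ G.pos z false < G.pos z true ∧ G.pos z true < G.pos x true) by omega),
            if_neg (show ¬(G.pos x true < G.pos z true ∧ G.pos z true < G.pos z false ∧ G.pos z false < G.pos y true) by omega),
            if_neg (show ¬(G.pos y true < G.pos y false ∧ G.pos y false < G.pos z true ∧ G.pos z true < G.pos x false) by omega),
            if_neg (show ¬(G.pos x false < G.pos z true ∧ G.pos z true < G.pos y false ∧ G.pos y false < G.pos y true) by omega),
            if_neg (show ¬(G.pos x true < G.pos y false ∧ G.pos y false < G.pos z false ∧ G.pos z false < G.pos x false) by omega),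
            if_neg (show ¬(G.pos x false < G.pos z false ∧ G.pos z false < G.pos y false ∧ G.pos y false < G.pos x true) by omega),
            if_neg (show ¬(G.pos x true < G.pos y false ∧ G.pos y false < G.pos x false ∧ G.pos x false < G.pos y true) by omega),
            if_neg (show ¬(G.pos y true < G.pos x false ∧ G.pos x false < G.pos y false ∧ G.pos y false < G.pos x true) by omega),
            if_neg (show ¬(G.pos x true < G.pos z false ∧ G.pos z false < G.pos x false ∧ G.pos x false < G.pos z true) by omega),
            if_neg (show ¬(G.pos z true < G.pos x false ∧ G.pos x false < G.pos z false ∧ G.pos z false < G.pos x true) by omega),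
            if_neg (show ¬(G.pos y true < G.pos z false ∧ G.pos z false < G.pos y false ∧ G.pos y false < G.pos z true) by omega),
            if_neg (show ¬(G.pos z true < G.pos y false ∧ G.pos y false < G.pos z false ∧ G.pos z false < G.pos y true) by omega)]
        all_goals norm_num
      · rw [if_neg (show ¬(G.pos y true < G.pos z false ∧ G.pos z false < G.pos z true ∧ G.pos z true < G.pos x true) by omega),
            if_neg (show ¬(G.pos x true < G.pos z true ∧ G.pos z true < G.pos z false ∧ G.pos z false < G.pos y true) by omega),
            if_neg (show ¬(G.pos y true < G.pos y false ∧ G.pos y false < G.pos z true ∧ G.pos z true < G.pos x false) by omega),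
            if_neg (show ¬(G.pos x false < G.pos z true ∧ G.pos z true < G.pos y false ∧ G.pos y false < G.pos y true) by omega),
            if_neg (show ¬(G.pos x true < G.pos y false ∧ G.pos y false < G.pos z false ∧ G.pos z false < G.pos x false) by omega),
            if_neg (show ¬(G.pos x false < G.pos z false ∧ G.pos z false < G.pos y false ∧ G.pos y false < G.pos x true) by omega),
            if_neg (show ¬(G.pos x true < G.pos y false ∧ G.pos y false < G.pos x false ∧ G.pos x false < G.pos y true) by omega),
            if_neg (show ¬(G.pos y true < G.pos x false ∧ G.pos x false < G.pos y false ∧ G.pos y false < G.pos x true) by omega),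
            if_neg (show ¬(G.pos x true < G.pos z false ∧ G.pos z false < G.pos x false ∧ G.pos x false < G.pos z true) by omega),
            if_neg (show ¬(G.pos z true < G.pos x false ∧ G.pos x false < G.pos z false ∧ G.pos z false < G.pos x true) by omega),
            if_neg (show ¬(G.pos y true < G.pos z false ∧ G.pos z false < G.pos y false ∧ G.pos y false < G.pos z true) by omega),
            if_neg (show ¬(G.pos z true < G.pos y false ∧ G.pos y false < G.pos z false ∧ G.pos z false < G.pos y true) by omega)]
        all_goals norm_num
      · exfalso; omega
      · rw [if_neg (show ¬(G.pos y true < G.pos z false ∧ G.pos z false < G.pos z true ∧ G.pos z true < G.pos x true) by omega),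
            if_neg (show ¬(G.pos x true < G.pos z true ∧ G.pos z true < G.pos z false ∧ G.pos z false < G.pos y true) by omega),
            if_neg (show ¬(G.pos y true < G.pos y false ∧ G.pos y false < G.pos z true ∧ G.pos z true < G.pos x false) by omega),
            if_neg (show ¬(G.pos x false < G.pos z true ∧ G.pos z true < G.pos y false ∧ G.pos y false < G.pos y true) by omega),
            if_neg (show ¬(G.pos x true < G.pos y false ∧ G.pos y false < G.pos z false ∧ G.pos z false < G.pos x false) by omega),
            if_neg (show ¬(G.pos x false < G.pos z false ∧ G.pos z false < G.pos y false ∧ G.pos y false < G.pos x true) by omega),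
            if_neg (show ¬(G.pos x true < G.pos y false ∧ G.pos y false < G.pos x false ∧ G.pos x false < G.pos y true) by omega),
            if_neg (show ¬(G.pos y true < G.pos x false ∧ G.pos x false < G.pos y false ∧ G.pos y false < G.pos x true) by omega),
            if_neg (show ¬(G.pos x true < G.pos z false ∧ G.pos z false < G.pos x false ∧ G.pos x false < G.pos z true) by omega),
            if_neg (show ¬(G.pos z true < G.pos x false ∧ G.pos x false < G.pos z false ∧ G.pos z false < G.pos x true) by omega),
            if_neg (show ¬(G.pos y true < G.pos z false ∧ G.pos z false < G.pos y false ∧ G.pos y false < G.pos z true) by omega),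
            if_neg (show ¬(G.pos z true < G.pos y false ∧ G.pos y false < G.pos z false ∧ G.pos z false < G.pos y true) by omega)]
        all_goals norm_num
      · rw [if_neg (show ¬(G.pos y true < G.pos z false ∧ G.pos z false < G.pos z true ∧ G.pos z true < G.pos x true) by omega),
            if_neg (show ¬(G.pos x true < G.pos z true ∧ G.pos z true < G.pos z false ∧ G.pos z false < G.pos y true) by omega),
            if_neg (show ¬(G.pos y true < G.pos y false ∧ G.pos y false < G.pos z true ∧ G.pos z true < G.pos x false) by omega),
            if_neg (show ¬(G.pos x false < G.pos z true ∧ G.pos z true < G.pos y false ∧ G.pos y false < G.pos y true) by omega),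
            if_neg (show ¬(G.pos x true < G.pos y false ∧ G.pos y false < G.pos z false ∧ G.pos z false < G.pos x false) by omega),
            if_neg (show ¬(G.pos x false < G.pos z false ∧ G.pos z false < G.pos y false ∧ G.pos y false < G.pos x true) by omega),
            if_neg (show ¬(G.pos x true < G.pos y false ∧ G.pos y false < G.pos x false ∧ G.pos x false < G.pos y true) by omega),
            if_neg (show ¬(G.pos y true < G.pos x false ∧ G.pos x false < G.pos y false ∧ G.pos y false < G.pos x true) by omega),
            if_neg (show ¬(G.pos x true < G.pos z false ∧ G.pos z false < G.pos x false ∧ G.pos x false < G.pos z true) by omega),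
            if_pos (show (G.pos z true < G.pos x false ∧ G.pos x false < G.pos z false ∧ G.pos z false < G.pos x true) by omega),
            if_neg (show ¬(G.pos y true < G.pos z false ∧ G.pos z false < G.pos y false ∧ G.pos y false < G.pos z true) by omega),
            if_pos (show (G.pos z true < G.pos y false ∧ G.pos y false < G.pos z false ∧ G.pos z false < G.pos y true) by omega)]
        all_goals norm_num
  · rw [sumL G', sumL G]
    apply split
    · intro p hp
      by_cases hcase : G.toGaussCode.LowerSkew p.1 p.2
      · rw [if_pos hcase, if_pos (((skewIff p.1 p.2 hp).2).2 hcase),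
          hH' p.1 p.2, hsign p.1, hsign p.2]
      · rw [if_neg hcase, if_neg (fun h => hcase (((skewIff p.1 p.2 hp).2).1 h))]
    · rw [hTsum, hTsum]
      dsimp only
      simp only [hH', hsign, hHxy, hHyx, hHxz, hHzx, hHzy, sxy, syx, sxz, szx, syz, szy]
      simp only [iteS, ← Finsupp.single_add]
      refine congrArg _ ?_
      have hU : ∀ (GG : GaussCode C) (a b : C), GG.LowerSkew a b ↔ (GG.pos a false < GG.pos b true ∧ GG.pos b true < GG.pos a true ∧ GG.pos a true < GG.pos b false) := fun _ _ _ => Iff.rfl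
      simp only [hU]
      simp only [ht1a, ht1b, ht2a, ht2b, ht3a, ht3b]
      rcases hAB with hab | hab <;> rcases hAC with hac | hac <;> rcases hBC with hbc | hbc
      · rw [if_neg (show ¬(G.pos z true < G.pos x true ∧ G.pos x true < G.pos y true ∧ G.pos y true < G.pos z false) by omega),
            if_neg (show ¬(G.pos z false < G.pos y true ∧ G.pos y true < G.pos x true ∧ G.pos x true < G.pos z true) by omega),
            if_neg (show ¬(G.pos z true < G.pos x false ∧ G.pos x false < G.pos y true ∧ G.pos y true < G.pos y false) by omega),
            if_neg (show ¬(G.pos y false < G.pos y true ∧ G.pos y true < G.pos x false ∧ G.pos x false < G.pos z true) by omega),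
            if_neg (show ¬(G.pos z false < G.pos x false ∧ G.pos x false < G.pos x true ∧ G.pos x true < G.pos y false) by omega),
            if_neg (show ¬(G.pos y false < G.pos x true ∧ G.pos x true < G.pos x false ∧ G.pos x false < G.pos z false) by omega),
            if_neg (show ¬(G.pos x false < G.pos y true ∧ G.pos y true < G.pos x true ∧ G.pos x true < G.pos y false) by omega),
            if_neg (show ¬(G.pos y false < G.pos x true ∧ G.pos x true < G.pos y true ∧ G.pos y true < G.pos x false) by omega),
            if_neg (show ¬(G.pos x false < G.pos z true ∧ G.pos z true < G.pos x true ∧ G.pos x true < G.pos z false) by omega),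
            if_neg (show ¬(G.pos z false < G.pos x true ∧ G.pos x true < G.pos z true ∧ G.pos z true < G.pos x false) by omega),
            if_neg (show ¬(G.pos y false < G.pos z true ∧ G.pos z true < G.pos y true ∧ G.pos y true < G.pos z false) by omega),
            if_neg (show ¬(G.pos z false < G.pos y true ∧ G.pos y true < G.pos z true ∧ G.pos z true < G.pos y false) by omega)]
        all_goals norm_num
      · rw [if_neg (show ¬(G.pos z true < G.pos x true ∧ G.pos x true < G.pos y true ∧ G.pos y true < G.pos z false) by omega),
            if_neg (show ¬(G.pos z false < G.pos y true ∧ G.pos y true < G.pos x true ∧ G.pos x true < G.pos z true) by omega),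
            if_neg (show ¬(G.pos z true < G.pos x false ∧ G.pos x false < G.pos y true ∧ G.pos y true < G.pos y false) by omega),
            if_neg (show ¬(G.pos y false < G.pos y true ∧ G.pos y true < G.pos x false ∧ G.pos x false < G.pos z true) by omega),
            if_neg (show ¬(G.pos z false < G.pos x false ∧ G.pos x false < G.pos x true ∧ G.pos x true < G.pos y false) by omega),
            if_neg (show ¬(G.pos y false < G.pos x true ∧ G.pos x true < G.pos x false ∧ G.pos x false < G.pos z false) by omega),
            if_neg (show ¬(G.pos x false < G.pos y true ∧ G.pos y true < G.pos x true ∧ G.pos x true < G.pos y false) by omega),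
            if_neg (show ¬(G.pos y false < G.pos x true ∧ G.pos x true < G.pos y true ∧ G.pos y true < G.pos x false) by omega),
            if_neg (show ¬(G.pos x false < G.pos z true ∧ G.pos z true < G.pos x true ∧ G.pos x true < G.pos z false) by omega),
            if_neg (show ¬(G.pos z false < G.pos x true ∧ G.pos x true < G.pos z true ∧ G.pos z true < G.pos x false) by omega),
            if_neg (show ¬(G.pos y false < G.pos z true ∧ G.pos z true < G.pos y true ∧ G.pos y true < G.pos z false) by omega),
            if_neg (show ¬(G.pos z false < G.pos y true ∧ G.pos y true < G.pos z true ∧ G.pos z true < G.pos y false) by omega)]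
        all_goals norm_num
      · exfalso; omega
      · rw [if_pos (show (G.pos z true < G.pos x true ∧ G.pos x true < G.pos y true ∧ G.pos y true < G.pos z false) by omega),
            if_neg (show ¬(G.pos z false < G.pos y true ∧ G.pos y true < G.pos x true ∧ G.pos x true < G.pos z true) by omega),
            if_pos (show (G.pos z true < G.pos x false ∧ G.pos x false < G.pos y true ∧ G.pos y true < G.pos y false) by omega),
            if_neg (show ¬(G.pos y false < G.pos y true ∧ G.pos y true < G.pos x false ∧ G.pos x false < G.pos z true) by omega),
            if_neg (show ¬(G.pos z false < G.pos x false ∧ G.pos x false < G.pos x true ∧ G.pos x true < G.pos y false) by omega),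
            if_neg (show ¬(G.pos y false < G.pos x true ∧ G.pos x true < G.pos x false ∧ G.pos x false < G.pos z false) by omega),
            if_neg (show ¬(G.pos x false < G.pos y true ∧ G.pos y true < G.pos x true ∧ G.pos x true < G.pos y false) by omega),
            if_neg (show ¬(G.pos y false < G.pos x true ∧ G.pos x true < G.pos y true ∧ G.pos y true < G.pos x false) by omega),
            if_neg (show ¬(G.pos x false < G.pos z true ∧ G.pos z true < G.pos x true ∧ G.pos x true < G.pos z false) by omega),
            if_neg (show ¬(G.pos z false < G.pos x true ∧ G.pos x true < G.pos z true ∧ G.pos z true < G.pos x false) by omega),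
            if_neg (show ¬(G.pos y false < G.pos z true ∧ G.pos z true < G.pos y true ∧ G.pos y true < G.pos z false) by omega),
            if_neg (show ¬(G.pos z false < G.pos y true ∧ G.pos y true < G.pos z true ∧ G.pos z true < G.pos y false) by omega)]
        all_goals norm_num
      · rw [if_neg (show ¬(G.pos z true < G.pos x true ∧ G.pos x true < G.pos y true ∧ G.pos y true < G.pos z false) by omega),
            if_neg (show ¬(G.pos z false < G.pos y true ∧ G.pos y true < G.pos x true ∧ G.pos x true < G.pos z true) by omega),
            if_neg (show ¬(G.pos z true < G.pos x false ∧ G.pos x false < G.pos y true ∧ G.pos y true < G.pos y false) by omega),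
            if_neg (show ¬(G.pos y false < G.pos y true ∧ G.pos y true < G.pos x false ∧ G.pos x false < G.pos z true) by omega),
            if_neg (show ¬(G.pos z false < G.pos x false ∧ G.pos x false < G.pos x true ∧ G.pos x true < G.pos y false) by omega),
            if_neg (show ¬(G.pos y false < G.pos x true ∧ G.pos x true < G.pos x false ∧ G.pos x false < G.pos z false) by omega),
            if_neg (show ¬(G.pos x false < G.pos y true ∧ G.pos y true < G.pos x true ∧ G.pos x true < G.pos y false) by omega),
            if_pos (show (G.pos y false < G.pos x true ∧ G.pos x true < G.pos y true ∧ G.pos y true < G.pos x false) by omega),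
            if_neg (show ¬(G.pos x false < G.pos z true ∧ G.pos z true < G.pos x true ∧ G.pos x true < G.pos z false) by omega),
            if_pos (show (G.pos z false < G.pos x true ∧ G.pos x true < G.pos z true ∧ G.pos z true < G.pos x false) by omega),
            if_neg (show ¬(G.pos y false < G.pos z true ∧ G.pos z true < G.pos y true ∧ G.pos y true < G.pos z false) by omega),
            if_neg (show ¬(G.pos z false < G.pos y true ∧ G.pos y true < G.pos z true ∧ G.pos z true < G.pos y false) by omega)]
        all_goals norm_num
      · exfalso; omega
      · rw [if_neg (show ¬(G.pos z true < G.pos x true ∧ G.pos x true < G.pos y true ∧ G.pos y true < G.pos z false) by omega),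
            if_neg (show ¬(G.pos z false < G.pos y true ∧ G.pos y true < G.pos x true ∧ G.pos x true < G.pos z true) by omega),
            if_neg (show ¬(G.pos z true < G.pos x false ∧ G.pos x false < G.pos y true ∧ G.pos y true < G.pos y false) by omega),
            if_neg (show ¬(G.pos y false < G.pos y true ∧ G.pos y true < G.pos x false ∧ G.pos x false < G.pos z true) by omega),
            if_neg (show ¬(G.pos z false < G.pos x false ∧ G.pos x false < G.pos x true ∧ G.pos x true < G.pos y false) by omega),
            if_neg (show ¬(G.pos y false < G.pos x true ∧ G.pos x true < G.pos x false ∧ G.pos x false < G.pos z false) by omega),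
            if_neg (show ¬(G.pos x false < G.pos y true ∧ G.pos y true < G.pos x true ∧ G.pos x true < G.pos y false) by omega),
            if_neg (show ¬(G.pos y false < G.pos x true ∧ G.pos x true < G.pos y true ∧ G.pos y true < G.pos x false) by omega),
            if_neg (show ¬(G.pos x false < G.pos z true ∧ G.pos z true < G.pos x true ∧ G.pos x true < G.pos z false) by omega),
            if_neg (show ¬(G.pos z false < G.pos x true ∧ G.pos x true < G.pos z true ∧ G.pos z true < G.pos x false) by omega),
            if_neg (show ¬(G.pos y false < G.pos z true ∧ G.pos z true < G.pos y true ∧ G.pos y true < G.pos z false) by omega),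
            if_neg (show ¬(G.pos z false < G.pos y true ∧ G.pos y true < G.pos z true ∧ G.pos z true < G.pos y false) by omega)]
        all_goals norm_num
      · rw [if_neg (show ¬(G.pos z true < G.pos x true ∧ G.pos x true < G.pos y true ∧ G.pos y true < G.pos z false) by omega),
            if_neg (show ¬(G.pos z false < G.pos y true ∧ G.pos y true < G.pos x true ∧ G.pos x true < G.pos z true) by omega),
            if_neg (show ¬(G.pos z true < G.pos x false ∧ G.pos x false < G.pos y true ∧ G.pos y true < G.pos y false) by omega),
            if_neg (show ¬(G.pos y false < G.pos y true ∧ G.pos y true < G.pos x false ∧ G.pos x false < G.pos z true) by omega),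
            if_neg (show ¬(G.pos z false < G.pos x false ∧ G.pos x false < G.pos x true ∧ G.pos x true < G.pos y false) by omega),
            if_neg (show ¬(G.pos y false < G.pos x true ∧ G.pos x true < G.pos x false ∧ G.pos x false < G.pos z false) by omega),
            if_neg (show ¬(G.pos x false < G.pos y true ∧ G.pos y true < G.pos x true ∧ G.pos x true < G.pos y false) by omega),
            if_neg (show ¬(G.pos y false < G.pos x true ∧ G.pos x true < G.pos y true ∧ G.pos y true < G.pos x false) by omega),
            if_neg (show ¬(G.pos x false < G.pos z true ∧ G.pos z true < G.pos x true ∧ G.pos x true < G.pos z false) by omega),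
            if_neg (show ¬(G.pos z false < G.pos x true ∧ G.pos x true < G.pos z true ∧ G.pos z true < G.pos x false) by omega),
            if_neg (show ¬(G.pos y false < G.pos z true ∧ G.pos z true < G.pos y true ∧ G.pos y true < G.pos z false) by omega),
            if_neg (show ¬(G.pos z false < G.pos y true ∧ G.pos y true < G.pos z true ∧ G.pos z true < G.pos y false) by omega)]
        all_goals norm_num
end

section
/- For every ℤ-enriched signed Gauss code with n crossings, ‖CH⁺‖ + ‖CH⁻‖ ≤ ⌊n²/4⌋, where ‖q‖ denotes the sum of the absolute values of the coordinates of the element q of the free ℤ-module on the set of subgroups of ℤ. -/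
section Aux

open Finsupp

private lemma norm_add_le' (x y : AddSubgroup ℤ →₀ ℤ) :
    EGaussCode.norm (x + y) ≤ EGaussCode.norm x + EGaussCode.norm y := by
  classical
  unfold EGaussCode.norm
  rw [Finsupp.sum_of_support_subset (x+y) (Finsupp.support_add) _ (fun i _ => rfl),
      Finsupp.sum_of_support_subset x (Finset.subset_union_left) _ (fun i _ => rfl),
      Finsupp.sum_of_support_subset y (Finset.subset_union_right) _ (fun i _ => rfl),
      ← Finset.sum_add_distrib]
  exact Finset.sum_le_sum fun i _ => by simp [Int.natAbs_add_le]

private lemma norm_sum_le' {ι : Type*} (s : Finset ι) (h : ι → AddSubgroup ℤ) (c : ι → ℤ) :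
    EGaussCode.norm (∑ p ∈ s, Finsupp.single (h p) (c p)) ≤ ∑ p ∈ s, (c p).natAbs := by
  classical
  induction s using Finset.induction with
  | empty => simp [EGaussCode.norm]
  | @insert a s hx ih =>
    rw [Finset.sum_insert hx, Finset.sum_insert hx]
    refine (norm_add_le' _ _).trans ?_
    have : EGaussCode.norm (Finsupp.single (h a) (c a)) ≤ (c a).natAbs := by
      unfold EGaussCode.norm
      rw [Finsupp.sum_single_index rfl]
    omega

private lemma skew_card_le {C : Type} [Fintype C] [DecidableEq C] (pos : C → Bool → ℤ)
    (Pp Pm : Finset (C × C))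
    (hPp : ∀ p ∈ Pp, pos p.1 true < pos p.2 false ∧ pos p.2 false < pos p.1 false ∧
      pos p.1 false < pos p.2 true)
    (hPm : ∀ p ∈ Pm, pos p.1 false < pos p.2 true ∧ pos p.2 true < pos p.1 true ∧
      pos p.1 true < pos p.2 false) :
    Pp.card + Pm.card ≤ Fintype.card C ^ 2 / 4 := by
  classical
  set A : Finset C := Finset.univ.filter (fun c => pos c true < pos c false) with hA
  set B : Finset C := Finset.univ.filter (fun c => ¬ pos c true < pos c false) with hB
  have hsubP : Pp ⊆ A ×ˢ B := by
    intro p hp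
    obtain ⟨h1, h2, h3⟩ := hPp p hp
    simp only [hA, hB, Finset.mem_product, Finset.mem_filter, Finset.mem_univ, true_and]
    omega
  have hsubM : Pm.image Prod.swap ⊆ A ×ˢ B := by
    intro q hq
    obtain ⟨p, hp, rfl⟩ := Finset.mem_image.mp hq
    obtain ⟨h1, h2, h3⟩ := hPm p hp
    simp only [hA, hB, Finset.mem_product, Finset.mem_filter, Finset.mem_univ, true_and,
      Prod.fst_swap, Prod.snd_swap]
    omega
  have hdisj : Disjoint Pp (Pm.image Prod.swap) := by
    rw [Finset.disjoint_left]
    intro p hp hq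
    obtain ⟨q, hqm, hqe⟩ := Finset.mem_image.mp hq
    obtain ⟨h1, h2, h3⟩ := hPp p hp
    obtain ⟨h4, h5, h6⟩ := hPm q hqm
    have e1 : q.2 = p.1 := congrArg Prod.fst hqe
    have e2 : q.1 = p.2 := congrArg Prod.snd hqe
    rw [e1, e2] at h4 h5 h6
    omega
  have hcard : Pp.card + Pm.card ≤ A.card * B.card := by
    have : Pm.card = (Pm.image Prod.swap).card :=
      (Finset.card_image_of_injective _ Prod.swap_injective).symm
    rw [this, ← Finset.card_union_of_disjoint hdisj]
    calc (Pp ∪ Pm.image Prod.swap).card ≤ (A ×ˢ B).card :=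
          Finset.card_le_card (Finset.union_subset hsubP hsubM)
      _ = A.card * B.card := Finset.card_product A B
  refine hcard.trans ?_
  have hab : A.card + B.card = Fintype.card C := by
    rw [hA, hB]
    simpa using Finset.card_filter_add_card_filter_not
      (s := (Finset.univ : Finset C)) (p := fun c => pos c true < pos c false)
  rw [Nat.le_div_iff_mul_le (by norm_num)]
  nlinarith [sq_nonneg (A.card - B.card : ℤ), hab]

end Aux

/-- for every ℤ-enriched signed Gauss code with `n` crossings,
`‖CH⁺‖ + ‖CH⁻‖ ≤ ⌊n²/4⌋`, where `‖q‖` is the sum of the absolute values of the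
coordinates of `q` in the free ℤ-module on the set of subgroups of `ℤ`. -/
theorem cassonH_norm_sum_le_crossing_sq_div_four {C : Type} [Fintype C] [DecidableEq C]
    (G : EGaussCode C) :
    EGaussCode.norm G.CHplus + EGaussCode.norm G.CHminus ≤
      Fintype.card C ^ 2 / 4 := by
  classical
  have h1 : EGaussCode.norm G.CHplus ≤ G.toGaussCode.Pplus.card := by
    refine (norm_sum_le' _ _ _).trans ?_
    refine le_of_eq ?_
    have e : ∀ p ∈ G.toGaussCode.Pplus, (G.sign p.1 * G.sign p.2).natAbs = 1 := fun p _ => by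
      rcases G.sign_unit p.1 with h | h <;> rcases G.sign_unit p.2 with h' | h' <;>
        simp [h, h']
    rw [Finset.sum_congr rfl e, Finset.sum_const, smul_eq_mul, mul_one]
  have h2 : EGaussCode.norm G.CHminus ≤ G.toGaussCode.Pminus.card := by
    refine (norm_sum_le' _ _ _).trans ?_
    refine le_of_eq ?_
    have e : ∀ p ∈ G.toGaussCode.Pminus, (G.sign p.1 * G.sign p.2).natAbs = 1 := fun p _ => by
      rcases G.sign_unit p.1 with h | h <;> rcases G.sign_unit p.2 with h' | h' <;>
        simp [h, h']
    rw [Finset.sum_congr rfl e, Finset.sum_const, smul_eq_mul, mul_one]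
  have h3 := skew_card_le G.pos G.toGaussCode.Pplus G.toGaussCode.Pminus
    (fun p hp => by
      have := (Finset.mem_filter.mp hp).2
      exact this)
    (fun p hp => by
      have := (Finset.mem_filter.mp hp).2
      exact this)
  omega
end
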